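/- arXiv:1407.5387 — 13 statements merged into one kernel-verified Lean document; each statement's English description precedes it below -/
import Mathlib

section
/- Let (f_n)_{n∈ℤ} be a family of C^∞ functions f_n : ℝ → ℝ with f_0 ≡ 1, and suppose the vector fields L_n = f_n ∂_t on ℝ form a realization of the Witt algebra, i.e. f_m·f_n′ − f_n·f_m′ = (m−n)f_{m+n} for all m, n ∈ ℤ. Then there exists a nonzero real constant c such that f_n(t) = cⁿ e^{−nt} for all n ∈ ℤ and t ∈ ℝ. (This is the content of Case 1 of the proof of Theorem 1 and of Theorem 2: a realization of the Witt algebra on ℝ with L_0 = ∂_t is, up to the scaling constant c, the canonical one.) -/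
/-- If `(f_n)_{n∈ℤ}` are `C^∞` functions on `ℝ` with `f_0 ≡ 1` and the vector fields
`L_n = f_n ∂_t` realize the Witt algebra, i.e.
`f_m·f_n' - f_n·f_m' = (m - n) f_{m+n}` for all `m, n ∈ ℤ`, then there is a nonzero
constant `c` with `f_n(t) = cⁿ e^{-nt}` for all `n ∈ ℤ`, `t ∈ ℝ`. -/
theorem witt_realization_R1_unique (f : ℤ → ℝ → ℝ)
    (hsmooth : ∀ n : ℤ, ContDiff ℝ (⊤ : ℕ∞) (f n))
    (h0 : ∀ t : ℝ, f 0 t = 1)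
    (hW : ∀ m n : ℤ, ∀ t : ℝ,
      f m t * deriv (f n) t - f n t * deriv (f m) t = ((m : ℝ) - (n : ℝ)) * f (m + n) t) :
    ∃ c : ℝ, c ≠ 0 ∧ ∀ n : ℤ, ∀ t : ℝ, f n t = c ^ n * Real.exp (-(n : ℝ) * t) := by
  have hdiff : ∀ n : ℤ, Differentiable ℝ (f n) := fun n => (hsmooth n).differentiable (by simp)
  have hf0 : f 0 = fun _ => (1:ℝ) := funext h0
  -- derivative relation
  have hderiv : ∀ n : ℤ, ∀ t : ℝ, deriv (f n) t = -(n : ℝ) * f n t := by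
    intro n t
    have h := hW 0 n t
    rw [hf0] at h
    simp at h
    linarith
  -- solve the ODE
  have hform : ∀ n : ℤ, ∀ t : ℝ, f n t = f n 0 * Real.exp (-(n:ℝ) * t) := by
    intro n t
    set g : ℝ → ℝ := fun s => f n s * Real.exp ((n:ℝ) * s) with hg
    have hgd : ∀ s, HasDerivAt g 0 s := by
      intro s
      have h1 : HasDerivAt (f n) (deriv (f n) s) s := (hdiff n s).hasDerivAt
      have hm : HasDerivAt (fun x : ℝ => (n:ℝ) * x) (n:ℝ) s := by
        simpa using (hasDerivAt_id s).const_mul (n:ℝ)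
      have h2 : HasDerivAt (fun s : ℝ => Real.exp ((n:ℝ)*s)) (Real.exp ((n:ℝ)*s) * (n:ℝ)) s :=
        hm.exp
      rw [show (0:ℝ) = deriv (f n) s * Real.exp ((n:ℝ)*s) + f n s * (Real.exp ((n:ℝ)*s) * (n:ℝ)) by
        rw [hderiv n s]; ring]
      exact h1.mul h2
    have hconst : ∀ x y : ℝ, g x = g y :=
      is_const_of_deriv_eq_zero (fun s => (hgd s).differentiableAt) (fun s => (hgd s).deriv)
    have key : f n t * Real.exp ((n:ℝ)*t) = f n 0 := by simpa [hg] using hconst t 0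
    rw [← key, mul_assoc, ← Real.exp_add]
    norm_num
  set C : ℤ → ℝ := fun n => f n 0 with hC
  have hC0 : C 0 = 1 := h0 0
  have hmul : ∀ m n : ℤ, m ≠ n → C (m+n) = C m * C n := by
    intro m n hmn
    have h := hW m n 0
    rw [hderiv n 0, hderiv m 0] at h
    have hne : (m:ℝ) - n ≠ 0 := sub_ne_zero.mpr (by exact_mod_cast hmn)
    have key : ((m:ℝ) - n) * (C m * C n) = ((m:ℝ)-n) * C (m+n) := by
      rw [← h]; simp only [hC]; ring
    exact (mul_left_cancel₀ hne key).symm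
  set c : ℝ := C 1 with hc
  have hinv : c * C (-1) = 1 := by
    have := hmul 1 (-1) (by decide)
    norm_num at this
    rw [← this, hC0]
  have hcne : c ≠ 0 := by
    intro h
    rw [h, zero_mul] at hinv
    exact zero_ne_one hinv
  -- C 2 = c ^ 2
  have h3 : C 3 = c * C 2 := by simpa using hmul 1 2 (by decide)
  have h5 : C 5 = C 2 * C 3 := by simpa using hmul 2 3 (by decide)
  have h4a : C 4 = c * C 3 := by simpa using hmul 1 3 (by decide)
  have h4b : C 4 = C 5 * C (-1) := by simpa using hmul 5 (-1) (by decide)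
  have hC2ne : C 2 ≠ 0 := by
    intro h
    have h22 := hmul 2 (-2) (by decide)
    norm_num at h22
    rw [hC0, h, zero_mul] at h22
    exact one_ne_zero h22
  have hC2 : C 2 = c ^ 2 := by
    have t1 : C 4 = c ^ 2 * C 2 := by rw [h4a, h3]; ring
    have t2 : C 4 = c * C 2 ^ 2 * C (-1) := by rw [h4b, h5, h3]; ring
    have e2 : c * (c ^ 2 * C 2) = c * (C 2 ^ 2) := by
      rw [← t1, t2]
      have : c * (c * C 2 ^ 2 * C (-1)) = (c * C (-1)) * (c * C 2 ^ 2) := by ring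
      rw [this, hinv, one_mul]
    have e3 : c ^ 2 * C 2 = C 2 ^ 2 := mul_left_cancel₀ hcne e2
    have e4 : C 2 * c ^ 2 = C 2 * C 2 := by linear_combination e3
    exact (mul_left_cancel₀ hC2ne e4).symm
  -- natural powers from 2 on
  have hnat2 : ∀ k : ℕ, C ((k:ℤ)+2) = c ^ (k+2) := by
    intro k
    induction k with
    | zero => simpa using hC2
    | succ k ih =>
      have hne : ((k:ℤ)+2) ≠ 1 := by omega
      have := hmul ((k:ℤ)+2) 1 hne
      have harg : ((k:ℤ)+2) + 1 = ((k+1:ℕ):ℤ) + 2 := by push_cast; ring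
      rw [harg] at this
      rw [this, ih]
      ring
  have hnat : ∀ k : ℕ, C (k:ℤ) = c ^ k := by
    intro k
    match k with
    | 0 => simpa using hC0
    | 1 => simp [hc]
    | (k+2) =>
      have := hnat2 k
      have harg : ((k:ℤ)+2) = ((k+2:ℕ):ℤ) := by push_cast; ring
      rw [harg] at this
      exact this
  have hCint : ∀ n : ℤ, C n = c ^ n := by
    intro n
    obtain ⟨k, rfl | rfl⟩ := n.eq_nat_or_neg
    · rw [hnat k, zpow_natCast]
    · rcases Nat.eq_zero_or_pos k with hk | hk
      · subst hk; simpa using hC0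
      · have hne : (-(k:ℤ)) ≠ (k:ℤ) := by omega
        have h := hmul (-(k:ℤ)) (k:ℤ) hne
        rw [neg_add_cancel, hC0, hnat k] at h
        have hpk : c ^ k ≠ 0 := pow_ne_zero k hcne
        have : C (-(k:ℤ)) = (c ^ k)⁻¹ := by
          field_simp at h ⊢
          linarith [h]
        rw [this, zpow_neg, zpow_natCast]
  refine ⟨c, hcne, fun n t => ?_⟩
  rw [hform n t]
  have : f n 0 = C n := rfl
  rw [this, hCint n]
end

section
/- Let L_0 = ∂_t and L_1 = e^{−t}∂_t be vector fields on ℝ³ (coordinates (t,x,u)). If Q is a smooth vector field on ℝ³ satisfying [L_0, Q] = Q and [L_1, Q] = 2L_0, then Q = e^{t}∂_t. (This is Case 1 of the proof of Lemma 1: given L_0 = ∂_t, L_1 = e^{−t}∂_t, the operator L_{−1} of the sl(2,ℝ) triple is necessarily e^{t}∂_t.) -/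
/-- Lie bracket of smooth vector fields on `ℝ³` (coordinates `(t,x,u)`), identified with
`C^∞` maps `ℝ³ → ℝ³`: `[X,Y](p) = (DY)(p)(X(p)) - (DX)(p)(Y(p))`. -/
noncomputable def lieBracket3 (X Y : ℝ × ℝ × ℝ → ℝ × ℝ × ℝ) : ℝ × ℝ × ℝ → ℝ × ℝ × ℝ :=
  fun p => fderiv ℝ Y p (X p) - fderiv ℝ X p (Y p)

/-- Let `L_0 = ∂_t` and `L_1 = e^{-t}∂_t` on `ℝ³`. If `Q` is a smooth vector field with
`[L_0, Q] = Q` and `[L_1, Q] = 2 L_0`, then `Q = e^t ∂_t`. -/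
theorem Lminus1_unique_case1 (Q : ℝ × ℝ × ℝ → ℝ × ℝ × ℝ)
    (hQ : ContDiff ℝ (⊤ : ℕ∞) Q)
    (h0 : lieBracket3 (fun _ => (1, 0, 0)) Q = Q)
    (h1 : lieBracket3 (fun p => (Real.exp (-p.1), 0, 0)) Q = fun _ => (2, 0, 0)) :
    Q = fun p => (Real.exp p.1, 0, 0) := by
  funext p
  have hQd : DifferentiableAt ℝ Q p := (hQ.differentiable (by norm_num)).differentiableAt
  have e0 : fderiv ℝ Q p (1, 0, 0) = Q p := by
    have := congrFun h0 p
    simpa [lieBracket3, fderiv_const] using this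
  -- derivative of L1 = fun q => exp(-q.1) • (1,0,0)
  have hexp : HasDerivAt (fun t : ℝ => Real.exp (-t)) (-Real.exp (-p.1)) p.1 := by
    simpa [Function.comp_def] using (Real.hasDerivAt_exp (-p.1)).comp p.1 ((hasDerivAt_id p.1).neg)
  have hf : HasFDerivAt (fun q : ℝ × ℝ × ℝ => Real.exp (-q.1))
      ((-Real.exp (-p.1)) • (ContinuousLinearMap.fst ℝ ℝ (ℝ × ℝ))) p :=
    hexp.comp_hasFDerivAt p hasFDerivAt_fst
  have hfun : (fun q : ℝ × ℝ × ℝ => ((Real.exp (-q.1), 0, 0) : ℝ × ℝ × ℝ))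
      = fun q => Real.exp (-q.1) • ((1, 0, 0) : ℝ × ℝ × ℝ) := by
    funext q; simp [Prod.ext_iff]
  have hL1 : HasFDerivAt (fun q : ℝ × ℝ × ℝ => ((Real.exp (-q.1), 0, 0) : ℝ × ℝ × ℝ))
      (((-Real.exp (-p.1)) • (ContinuousLinearMap.fst ℝ ℝ (ℝ × ℝ))).smulRight
        ((1, 0, 0) : ℝ × ℝ × ℝ)) p := by
    rw [hfun]
    exact hf.smul_const _
  have e1 := congrFun h1 p
  simp only [lieBracket3, hL1.fderiv] at e1
  have hsargs : ((Real.exp (-p.1), 0, 0) : ℝ × ℝ × ℝ) = Real.exp (-p.1) • (1, 0, 0) := by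
    simp [Prod.ext_iff]
  rw [hsargs, (fderiv ℝ Q p).map_smul, e0] at e1
  simp only [ContinuousLinearMap.smulRight_apply, ContinuousLinearMap.smul_apply,
    ContinuousLinearMap.coe_fst', smul_eq_mul, Prod.smul_def, Prod.sub_def,
    Prod.mk.injEq, smul_eq_mul] at e1
  obtain ⟨ea, eb, ec⟩ := e1
  have hx := Real.exp_pos p.1
  have hxn : Real.exp (-p.1) = (Real.exp p.1)⁻¹ := Real.exp_neg p.1
  refine Prod.ext ?_ (Prod.ext ?_ ?_) <;> simp_all
  field_simp at ea
  linarith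
end

section
/- Let L_0 = ∂_t and L_1 = e^{−t}(∂_t + ∂_x) be vector fields on ℝ³ (coordinates (t,x,u)). A smooth vector field Q on ℝ³ satisfies [L_0, Q] = Q and [L_1, Q] = 2L_0 if and only if there exist C^∞ functions f₁, g₁, h₁ : ℝ → ℝ such that Q = e^{t}(1 − e^{−2x} f₁(u)) ∂_t + e^{t}(−1 − e^{−2x} f₁(u) + e^{−x} g₁(u)) ∂_x + e^{t−x} h₁(u) ∂_u. (This is the general form of L_{−1} obtained in Case 2 of the proof of Lemma 1.) -/
set_option linter.unreachableTactic false
set_option linter.unusedTactic false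

private lemma hd_fst {E F : Type*} [NormedAddCommGroup E] [NormedSpace ℝ E]
    [NormedAddCommGroup F] [NormedSpace ℝ F]
    {G : ℝ → E × F} {D : E × F} {x : ℝ} (h : HasDerivAt G D x) :
    HasDerivAt (fun y => (G y).1) D.1 x :=
  (hasFDerivAt_fst.comp_hasDerivAt x h :)

private lemma hd_snd {E F : Type*} [NormedAddCommGroup E] [NormedSpace ℝ E]
    [NormedAddCommGroup F] [NormedSpace ℝ F]
    {G : ℝ → E × F} {D : E × F} {x : ℝ} (h : HasDerivAt G D x) :
    HasDerivAt (fun y => (G y).2) D.2 x :=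
  (hasFDerivAt_snd.comp_hasDerivAt x h :)

private lemma comp_line {Q : ℝ × ℝ × ℝ → ℝ × ℝ × ℝ} {γ : ℝ → ℝ × ℝ × ℝ} {v : ℝ × ℝ × ℝ} {s : ℝ}
    (hQ : DifferentiableAt ℝ Q (γ s)) (hγ : HasDerivAt γ v s) :
    HasDerivAt (fun y => Q (γ y)) (fderiv ℝ Q (γ s) v) s :=
  hQ.hasFDerivAt.comp_hasDerivAt s hγ

private lemma fderiv_decomp (L : ℝ × ℝ × ℝ →L[ℝ] ℝ × ℝ × ℝ) (w : ℝ × ℝ × ℝ) :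
    L w = w.1 • L (1,0,0) + w.2.1 • L (0,1,0) + w.2.2 • L (0,0,1) := by
  have hw : w = w.1 • ((1:ℝ),(0:ℝ),(0:ℝ)) + w.2.1 • ((0:ℝ),(1:ℝ),(0:ℝ))
      + w.2.2 • ((0:ℝ),(0:ℝ),(1:ℝ)) := by
    simp [Prod.ext_iff]
  conv_lhs => rw [hw]
  simp only [map_add, map_smul]

-- fderiv of Q at p in the t-direction, as derivative of a 1-variable slice
private lemma fderiv_dir1 {Q : ℝ × ℝ × ℝ → ℝ × ℝ × ℝ} (hQ : Differentiable ℝ Q) (t x u : ℝ) :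
    HasDerivAt (fun s : ℝ => Q (s, x, u)) (fderiv ℝ Q (t,x,u) (1,0,0)) t :=
  comp_line (hQ _) ((hasDerivAt_id t).prodMk (hasDerivAt_const _ _))

private lemma fderiv_dir2 {Q : ℝ × ℝ × ℝ → ℝ × ℝ × ℝ} (hQ : Differentiable ℝ Q) (t x u : ℝ) :
    HasDerivAt (fun s : ℝ => Q (t, s, u)) (fderiv ℝ Q (t,x,u) (0,1,0)) x :=
  comp_line (hQ _) ((hasDerivAt_const _ _).prodMk ((hasDerivAt_id x).prodMk (hasDerivAt_const _ _)))

private lemma fderiv_dir3 {Q : ℝ × ℝ × ℝ → ℝ × ℝ × ℝ} (hQ : Differentiable ℝ Q) (t x u : ℝ) :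
    HasDerivAt (fun s : ℝ => Q (t, x, s)) (fderiv ℝ Q (t,x,u) (0,0,1)) u :=
  comp_line (hQ _) ((hasDerivAt_const _ _).prodMk ((hasDerivAt_const _ _).prodMk (hasDerivAt_id u)))

-- the vector field L1 and its directional derivatives
private lemma X_contDiff : ContDiff ℝ (⊤ : ℕ∞)
    (fun p : ℝ × ℝ × ℝ => ((Real.exp (-p.1), Real.exp (-p.1), 0) : ℝ × ℝ × ℝ)) :=
  (Real.contDiff_exp.comp contDiff_fst.neg).prodMk
    ((Real.contDiff_exp.comp contDiff_fst.neg).prodMk contDiff_const)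

private lemma fderiv_X (p w : ℝ × ℝ × ℝ) :
    fderiv ℝ (fun q : ℝ × ℝ × ℝ => ((Real.exp (-q.1), Real.exp (-q.1), 0) : ℝ × ℝ × ℝ)) p w
      = (-(Real.exp (-p.1)) * w.1, -(Real.exp (-p.1)) * w.1, 0) := by
  obtain ⟨t, x, u⟩ := p
  set X : ℝ × ℝ × ℝ → ℝ × ℝ × ℝ := fun q => (Real.exp (-q.1), Real.exp (-q.1), 0) with hX
  have hXd : Differentiable ℝ X := X_contDiff.differentiable (by simp)
  have h1 : fderiv ℝ X (t,x,u) (1,0,0) = (-(Real.exp (-t)), -(Real.exp (-t)), 0) := by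
    have ha := fderiv_dir1 hXd t x u
    have hb : HasDerivAt (fun s : ℝ => X (s, x, u))
        ((-(Real.exp (-t)), -(Real.exp (-t)), 0) : ℝ × ℝ × ℝ) t := by
      have he : HasDerivAt (fun s : ℝ => Real.exp (-s)) (-(Real.exp (-t))) t := by
        simpa using ((hasDerivAt_id t).neg.exp)
      exact he.prodMk (he.prodMk (hasDerivAt_const _ _))
    exact ha.unique hb
  have h2 : fderiv ℝ X (t,x,u) (0,1,0) = 0 := by
    have ha := fderiv_dir2 hXd t x u
    exact ha.unique (hasDerivAt_const _ ((Real.exp (-t), Real.exp (-t), 0) : ℝ × ℝ × ℝ))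
  have h3 : fderiv ℝ X (t,x,u) (0,0,1) = 0 := by
    have ha := fderiv_dir3 hXd t x u
    exact ha.unique (hasDerivAt_const _ ((Real.exp (-t), Real.exp (-t), 0) : ℝ × ℝ × ℝ))
  rw [show (fderiv ℝ X (t,x,u)) w
      = w.1 • (fderiv ℝ X (t,x,u)) (1,0,0) + w.2.1 • (fderiv ℝ X (t,x,u)) (0,1,0)
        + w.2.2 • (fderiv ℝ X (t,x,u)) (0,0,1) from fderiv_decomp _ w,
    h1, h2, h3]
  simp [Prod.ext_iff]; ring

private lemma reverse_dir (f₁ g₁ h₁ : ℝ → ℝ) (Q : ℝ × ℝ × ℝ → ℝ × ℝ × ℝ)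
    (hQ : ContDiff ℝ (⊤ : ℕ∞) Q)
    (hform : Q = fun p =>
        (Real.exp p.1 * (1 - Real.exp (-2 * p.2.1) * f₁ p.2.2),
         Real.exp p.1 * (-1 - Real.exp (-2 * p.2.1) * f₁ p.2.2 +
           Real.exp (-p.2.1) * g₁ p.2.2),
         Real.exp (p.1 - p.2.1) * h₁ p.2.2)) :
    (lieBracket3 (fun _ => (1, 0, 0)) Q = Q ∧
      lieBracket3 (fun p => (Real.exp (-p.1), Real.exp (-p.1), 0)) Q = fun _ => (2, 0, 0)) := by
  have hQd : Differentiable ℝ Q := hQ.differentiable (by simp)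
  -- directional derivatives of Q
  have key1 : ∀ t x u : ℝ, fderiv ℝ Q (t,x,u) (1,0,0) = Q (t,x,u) := by
    intro t x u
    have ha := fderiv_dir1 hQd t x u
    have hb : HasDerivAt (fun s : ℝ => Q (s, x, u)) (Q (t,x,u)) t := by
      rw [hform]
      refine HasDerivAt.prodMk ?_ (HasDerivAt.prodMk ?_ ?_) <;> dsimp only
      · exact (Real.hasDerivAt_exp t).mul_const _
      · exact (Real.hasDerivAt_exp t).mul_const _
      · have h : HasDerivAt (fun s : ℝ => s - x) 1 t := (hasDerivAt_id t).sub_const x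
        simpa using (h.exp.mul_const (h₁ u))
    exact ha.unique hb
  have key2 : ∀ t x u : ℝ, fderiv ℝ Q (t,x,u) (0,1,0) =
      (Real.exp t * (2 * Real.exp (-2*x) * f₁ u),
       Real.exp t * (2 * Real.exp (-2*x) * f₁ u - Real.exp (-x) * g₁ u),
       -(Real.exp (t-x) * h₁ u)) := by
    intro t x u
    have ha := fderiv_dir2 hQd t x u
    have hb : HasDerivAt (fun s : ℝ => Q (t, s, u))
        ((Real.exp t * (2 * Real.exp (-2*x) * f₁ u),
          Real.exp t * (2 * Real.exp (-2*x) * f₁ u - Real.exp (-x) * g₁ u),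
          -(Real.exp (t-x) * h₁ u)) : ℝ × ℝ × ℝ) x := by
      rw [hform]
      refine HasDerivAt.prodMk ?_ (HasDerivAt.prodMk ?_ ?_) <;> dsimp only
      · have h2 : HasDerivAt (fun s : ℝ => -2 * s) (-2) x := by
          simpa using (hasDerivAt_id x).const_mul (-2 : ℝ)
        have he : HasDerivAt (fun s : ℝ => Real.exp (-2 * s)) (Real.exp (-2*x) * (-2)) x :=
          h2.exp
        have := ((he.mul_const (f₁ u)).const_sub 1).const_mul (Real.exp t)
        refine this.congr_deriv (Eq.symm ?_); ring
      · have h2 : HasDerivAt (fun s : ℝ => -2 * s) (-2) x := by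
          simpa using (hasDerivAt_id x).const_mul (-2 : ℝ)
        have he : HasDerivAt (fun s : ℝ => Real.exp (-2 * s)) (Real.exp (-2*x) * (-2)) x :=
          h2.exp
        have hn : HasDerivAt (fun s : ℝ => Real.exp (-s)) (-(Real.exp (-x))) x := by
          simpa using (hasDerivAt_id x).neg.exp
        have := (((hasDerivAt_const x (-1 : ℝ)).sub (he.mul_const (f₁ u))).add
          (hn.mul_const (g₁ u))).const_mul (Real.exp t)
        refine this.congr_deriv (Eq.symm ?_); ring
      · have h : HasDerivAt (fun s : ℝ => t - s) (-1) x := by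
          simpa using ((hasDerivAt_id x).const_sub t)
        have := (h.exp.mul_const (h₁ u))
        refine this.congr_deriv (Eq.symm ?_); ring
    exact ha.unique hb
  constructor
  · funext p
    obtain ⟨t, x, u⟩ := p
    simp only [lieBracket3]
    rw [fderiv_fun_const]
    simp only [ContinuousLinearMap.zero_apply, key1]
    simp
  · funext p
    obtain ⟨t, x, u⟩ := p
    simp only [lieBracket3]
    rw [fderiv_X]
    have hsplit : ((Real.exp (-t), Real.exp (-t), 0) : ℝ × ℝ × ℝ)
        = Real.exp (-t) • ((1:ℝ),(0:ℝ),(0:ℝ)) + Real.exp (-t) • ((0:ℝ),(1:ℝ),(0:ℝ)) := by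
      simp [Prod.ext_iff]
    rw [hsplit, map_add, map_smul, map_smul, key1, key2]
    rw [hform]
    simp only [Prod.ext_iff, Prod.smul_mk, Prod.mk_add_mk, Prod.mk_sub_mk, smul_eq_mul]
    have hee : Real.exp (-t) * Real.exp t = 1 := by
      rw [← Real.exp_add]; simp
    refine ⟨?_, ?_, ?_⟩ <;> nlinarith [hee, Real.exp_pos t]

private lemma forward_dir (Q : ℝ × ℝ × ℝ → ℝ × ℝ × ℝ) (hQ : ContDiff ℝ (⊤ : ℕ∞) Q)
    (h1 : lieBracket3 (fun _ => (1, 0, 0)) Q = Q)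
    (h2 : lieBracket3 (fun p => (Real.exp (-p.1), Real.exp (-p.1), 0)) Q = fun _ => (2, 0, 0)) :
    (∃ f₁ g₁ h₁ : ℝ → ℝ, ContDiff ℝ (⊤ : ℕ∞) f₁ ∧ ContDiff ℝ (⊤ : ℕ∞) g₁ ∧
      ContDiff ℝ (⊤ : ℕ∞) h₁ ∧
      Q = fun p =>
        (Real.exp p.1 * (1 - Real.exp (-2 * p.2.1) * f₁ p.2.2),
         Real.exp p.1 * (-1 - Real.exp (-2 * p.2.1) * f₁ p.2.2 +
           Real.exp (-p.2.1) * g₁ p.2.2),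
         Real.exp (p.1 - p.2.1) * h₁ p.2.2)) := by
  have hQd : Differentiable ℝ Q := hQ.differentiable (by simp)
  -- equation 1 : ∂ₜ Q = Q
  have e1 : ∀ p : ℝ × ℝ × ℝ, fderiv ℝ Q p (1,0,0) = Q p := by
    intro p
    have := congrFun h1 p
    simp only [lieBracket3, fderiv_fun_const] at this
    simpa using this
  -- equation 2 : ∂ₜ Q + ∂ₓ Q + Q₁ • (1,1,0) = (2 eᵗ, 0, 0)
  have e2 : ∀ p : ℝ × ℝ × ℝ, fderiv ℝ Q p (1,0,0) + fderiv ℝ Q p (0,1,0)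
      + (Q p).1 • ((1:ℝ),(1:ℝ),(0:ℝ)) = Real.exp p.1 • ((2:ℝ),(0:ℝ),(0:ℝ)) := by
    intro p
    have h := congrFun h2 p
    simp only [lieBracket3] at h
    rw [fderiv_X] at h
    have hsplit : ((Real.exp (-p.1), Real.exp (-p.1), 0) : ℝ × ℝ × ℝ)
        = Real.exp (-p.1) • (((1:ℝ),(0:ℝ),(0:ℝ)) + ((0:ℝ),(1:ℝ),(0:ℝ))) := by
      simp [Prod.ext_iff]
    rw [hsplit, map_smul, map_add] at h
    have hQ1 : ((-(Real.exp (-p.1)) * (Q p).1, -(Real.exp (-p.1)) * (Q p).1, 0) : ℝ × ℝ × ℝ)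
        = -(Real.exp (-p.1)) • ((Q p).1 • ((1:ℝ),(1:ℝ),(0:ℝ))) := by
      simp [Prod.ext_iff]
    rw [hQ1] at h
    have hee : Real.exp p.1 * Real.exp (-p.1) = 1 := by rw [← Real.exp_add]; simp
    have h' := congrArg (fun v => Real.exp p.1 • v) h
    simp only [smul_sub, smul_smul] at h'
    rw [show Real.exp p.1 * (-(Real.exp (-p.1)) * (Q p).1) = -(Q p).1 by
        linear_combination (-(Q p).1) * hee,
      neg_smul, sub_neg_eq_add, hee, one_smul] at h'
    exact h'
  -- Step A : Q (t,x,u) = eᵗ • Q (0,x,u)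
  have stepA : ∀ t x u : ℝ, Q (t,x,u) = Real.exp t • Q (0,x,u) := by
    intro t x u
    set F : ℝ → ℝ × ℝ × ℝ := fun s => Real.exp (-s) • Q (s,x,u) with hF
    have hFd : ∀ s : ℝ, HasDerivAt F 0 s := by
      intro s
      have hc : HasDerivAt (fun s : ℝ => Real.exp (-s)) (-(Real.exp (-s))) s := by
        simpa using (hasDerivAt_id s).neg.exp
      have hf := fderiv_dir1 hQd s x u
      have := hc.smul hf
      rw [e1 (s,x,u)] at this
      simp at this; exact this
    have hconst : F t = F 0 :=
      is_const_of_deriv_eq_zero (fun s => (hFd s).differentiableAt)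
        (fun s => (hFd s).deriv) t 0
    have hee : Real.exp t * Real.exp (-t) = 1 := by rw [← Real.exp_add]; simp
    have := congrArg (fun v => Real.exp t • v) hconst
    simp only [hF, smul_smul, hee, one_smul] at this
    simpa using this
  -- Step B : the ODE in x at t = 0
  have stepB : ∀ x u : ℝ, fderiv ℝ Q (0,x,u) (0,1,0)
      = ((2:ℝ),(0:ℝ),(0:ℝ)) - Q (0,x,u) - (Q (0,x,u)).1 • ((1:ℝ),(1:ℝ),(0:ℝ)) := by
    intro x u
    have h := e2 (0,x,u)
    rw [e1 (0,x,u)] at h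
    simp only [Real.exp_zero, one_smul] at h
    linear_combination (norm := module) h
  -- derivative of x ↦ Q (0,x,u)
  have hAder : ∀ x u : ℝ, HasDerivAt (fun x' : ℝ => Q (0,x',u))
      (((2:ℝ),(0:ℝ),(0:ℝ)) - Q (0,x,u) - (Q (0,x,u)).1 • ((1:ℝ),(1:ℝ),(0:ℝ))) x := by
    intro x u
    have := fderiv_dir2 hQd 0 x u
    rwa [stepB x u] at this
  set f₁ : ℝ → ℝ := fun u => 1 - (Q (0,0,u)).1 with hf₁
  set g₁ : ℝ → ℝ := fun u => (Q (0,0,u)).2.1 + 2 - (Q (0,0,u)).1 with hg₁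
  set h₁ : ℝ → ℝ := fun u => (Q (0,0,u)).2.2 with hh₁
  have hQ0 : ContDiff ℝ (⊤ : ℕ∞) (fun u : ℝ => Q (0,0,u)) :=
    hQ.comp (contDiff_const.prodMk (contDiff_const.prodMk contDiff_id))
  -- component ODE solutions
  have C1 : ∀ x u : ℝ, (Q (0,x,u)).1 = 1 - Real.exp (-2*x) * f₁ u := by
    intro x u
    set G : ℝ → ℝ := fun x' => Real.exp (2*x') * ((Q (0,x',u)).1 - 1) with hG
    have hGd : ∀ x' : ℝ, HasDerivAt G 0 x' := by
      intro x'
      have hex : HasDerivAt (fun x' : ℝ => Real.exp (2*x')) (Real.exp (2*x') * 2) x' := by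
        exact (HasDerivAt.exp (by simpa using (hasDerivAt_id x').const_mul (2:ℝ)))
      have ha1 : HasDerivAt (fun x' : ℝ => (Q (0,x',u)).1 - 1)
          (2 - 2 * (Q (0,x',u)).1) x' := by
        have := (hd_fst (hAder x' u)).sub_const 1
        refine this.congr_deriv (Eq.symm ?_)
        simp; try ring; try ring
      have := hex.mul ha1
      refine this.congr_deriv (Eq.symm ?_); ring
    have hconst : G x = G 0 :=
      is_const_of_deriv_eq_zero (fun s => (hGd s).differentiableAt)
        (fun s => (hGd s).deriv) x 0
    simp only [hG, mul_zero, Real.exp_zero, one_mul] at hconst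
    have hne : Real.exp (2*x) ≠ 0 := Real.exp_ne_zero _
    have h2x : Real.exp (2*x) * Real.exp (-2*x) = 1 := by
      rw [← Real.exp_add]; norm_num
    refine mul_left_cancel₀ hne ?_
    simp only [hf₁]
    linear_combination hconst + (1 - (Q (0,0,u)).1) * h2x
  have C3 : ∀ x u : ℝ, (Q (0,x,u)).2.2 = Real.exp (-x) * h₁ u := by
    intro x u
    set G : ℝ → ℝ := fun x' => Real.exp x' * (Q (0,x',u)).2.2 with hG
    have hGd : ∀ x' : ℝ, HasDerivAt G 0 x' := by
      intro x'
      have ha3 : HasDerivAt (fun x' : ℝ => (Q (0,x',u)).2.2)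
          (-(Q (0,x',u)).2.2) x' := by
        have := hd_snd (hd_snd (hAder x' u))
        refine this.congr_deriv (Eq.symm ?_)
        simp; try ring
      have := (Real.hasDerivAt_exp x').mul ha3
      refine this.congr_deriv (Eq.symm ?_); ring
    have hconst : G x = G 0 :=
      is_const_of_deriv_eq_zero (fun s => (hGd s).differentiableAt)
        (fun s => (hGd s).deriv) x 0
    simp only [hG, Real.exp_zero, one_mul] at hconst
    have hne : Real.exp x ≠ 0 := Real.exp_ne_zero _
    have h1x : Real.exp x * Real.exp (-x) = 1 := by
      rw [← Real.exp_add]; norm_num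
    refine mul_left_cancel₀ hne ?_
    simp only [hh₁]
    linear_combination hconst - (Q (0,0,u)).2.2 * h1x
  have C2 : ∀ x u : ℝ, (Q (0,x,u)).2.1
      = -1 - Real.exp (-2*x) * f₁ u + Real.exp (-x) * g₁ u := by
    intro x u
    set G : ℝ → ℝ := fun x' => Real.exp x' * (Q (0,x',u)).2.1 + Real.exp x'
      + Real.exp (-x') * f₁ u with hG
    have hGd : ∀ x' : ℝ, HasDerivAt G 0 x' := by
      intro x'
      have ha2 : HasDerivAt (fun x' : ℝ => (Q (0,x',u)).2.1)
          (-(Q (0,x',u)).2.1 - (Q (0,x',u)).1) x' := by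
        have := hd_fst (hd_snd (hAder x' u))
        refine this.congr_deriv (Eq.symm ?_)
        simp; try ring; try ring
      have hn : HasDerivAt (fun x' : ℝ => Real.exp (-x')) (-(Real.exp (-x'))) x' := by
        simpa using (hasDerivAt_id x').neg.exp
      have := (((Real.hasDerivAt_exp x').mul ha2).add (Real.hasDerivAt_exp x')).add
        (hn.mul_const (f₁ u))
      refine this.congr_deriv (Eq.symm ?_)
      rw [C1 x' u]
      have h2x : Real.exp x' * Real.exp (-2*x') = Real.exp (-x') := by
        rw [← Real.exp_add]; ring_nf
      linear_combination (-(f₁ u)) * h2x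
    have hconst : G x = G 0 :=
      is_const_of_deriv_eq_zero (fun s => (hGd s).differentiableAt)
        (fun s => (hGd s).deriv) x 0
    simp only [hG, Real.exp_zero, one_mul, neg_zero] at hconst
    have hG0 : Real.exp x * (Q (0,x,u)).2.1 + Real.exp x + Real.exp (-x) * f₁ u = g₁ u := by
      rw [hconst, hg₁, hf₁]; ring
    have hne : Real.exp x ≠ 0 := Real.exp_ne_zero _
    have h2x : Real.exp x * Real.exp (-2*x) = Real.exp (-x) := by
      rw [← Real.exp_add]; ring_nf
    have h1x : Real.exp x * Real.exp (-x) = 1 := by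
      rw [← Real.exp_add]; simp
    refine mul_left_cancel₀ hne ?_
    linear_combination hG0 + (f₁ u) * h2x - (g₁ u) * h1x
  refine ⟨f₁, g₁, h₁, ?_, ?_, ?_, ?_⟩
  · exact contDiff_const.sub hQ0.fst
  · exact (hQ0.snd.fst.add contDiff_const).sub hQ0.fst
  · exact hQ0.snd.snd
  · funext p
    obtain ⟨t, x, u⟩ := p
    rw [stepA t x u]
    have hxu : Q (0,x,u) = ((1 - Real.exp (-2*x) * f₁ u,
        -1 - Real.exp (-2*x) * f₁ u + Real.exp (-x) * g₁ u,
        Real.exp (-x) * h₁ u) : ℝ × ℝ × ℝ) := by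
      refine Prod.ext (C1 x u) (Prod.ext (C2 x u) (C3 x u))
    rw [hxu]
    have htx : Real.exp t * Real.exp (-x) = Real.exp (t - x) := by
      rw [← Real.exp_add]; ring_nf
    have h3 : Real.exp t * (Real.exp (-x) * h₁ u) = Real.exp (t-x) * h₁ u := by
      rw [← htx]; ring
    simp [Prod.ext_iff, h3]


/-- Let `L_0 = ∂_t` and `L_1 = e^{-t}(∂_t + ∂_x)` on `ℝ³`. A smooth vector field `Q`
satisfies `[L_0, Q] = Q` and `[L_1, Q] = 2 L_0` iff there are `C^∞` functions
`f₁, g₁, h₁ : ℝ → ℝ` with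
`Q = e^t(1 - e^{-2x} f₁(u)) ∂_t + e^t(-1 - e^{-2x} f₁(u) + e^{-x} g₁(u)) ∂_x
   + e^{t-x} h₁(u) ∂_u`. -/
theorem Lminus1_form_case2 (Q : ℝ × ℝ × ℝ → ℝ × ℝ × ℝ)
    (hQ : ContDiff ℝ (⊤ : ℕ∞) Q) :
    (lieBracket3 (fun _ => (1, 0, 0)) Q = Q ∧
      lieBracket3 (fun p => (Real.exp (-p.1), Real.exp (-p.1), 0)) Q = fun _ => (2, 0, 0)) ↔
    (∃ f₁ g₁ h₁ : ℝ → ℝ, ContDiff ℝ (⊤ : ℕ∞) f₁ ∧ ContDiff ℝ (⊤ : ℕ∞) g₁ ∧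
      ContDiff ℝ (⊤ : ℕ∞) h₁ ∧
      Q = fun p =>
        (Real.exp p.1 * (1 - Real.exp (-2 * p.2.1) * f₁ p.2.2),
         Real.exp p.1 * (-1 - Real.exp (-2 * p.2.1) * f₁ p.2.2 +
           Real.exp (-p.2.1) * g₁ p.2.2),
         Real.exp (p.1 - p.2.1) * h₁ p.2.2)) := by
  constructor
  · rintro ⟨h1, h2⟩
    exact forward_dir Q hQ h1 h2
  · rintro ⟨f₁, g₁, h₁, hf, hg, hh, hform⟩
    exact reverse_dir f₁ g₁ h₁ Q hQ hform
end

section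
/- For γ = −1, the family of vector fields on ℝ² given by L_n = e^{−nt+(n−1)x}[e^{2x} − (n+1)γe^{x} + (1/2)n(n+1)γ²](e^{x}−γ)^{−n−1} ∂_t + e^{−nt+(n−1)x}[n e^{x} − (1/2)n(n+1)γ](e^{x}−γ)^{−n} ∂_x, i.e. L_n = e^{−nt+(n−1)x}[e^{2x} + (n+1)e^{x} + n(n+1)/2](e^{x}+1)^{−n−1} ∂_t + e^{−nt+(n−1)x}[n e^{x} + n(n+1)/2](e^{x}+1)^{−n} ∂_x (n ∈ ℤ), is a realization of the Witt algebra: [L_m, L_n] = (m−n)L_{m+n} for all m, n ∈ ℤ. (This is the realization 𝔚₃ of Theorem 1 with γ = −1, for which the coefficients are smooth on all of ℝ².) -/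
/-- Lie bracket of smooth vector fields on `ℝ²` (coordinates `(t,x)`), identified with
`C^∞` maps `ℝ² → ℝ²`: `[X,Y](p) = (DY)(p)(X(p)) - (DX)(p)(Y(p))`. -/
noncomputable def lieBracket2 (X Y : ℝ × ℝ → ℝ × ℝ) : ℝ × ℝ → ℝ × ℝ :=
  fun p => fderiv ℝ Y p (X p) - fderiv ℝ X p (Y p)

/-- The realization `𝔚₃` with `γ = -1`:
`L_n = e^{-nt+(n-1)x}[e^{2x} + (n+1)e^x + n(n+1)/2](e^x+1)^{-n-1} ∂_t
     + e^{-nt+(n-1)x}[n e^x + n(n+1)/2](e^x+1)^{-n} ∂_x`. -/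
noncomputable def W3field (n : ℤ) : ℝ × ℝ → ℝ × ℝ := fun p =>
  (Real.exp (-(n : ℝ) * p.1 + ((n : ℝ) - 1) * p.2) *
     (Real.exp (2 * p.2) + ((n : ℝ) + 1) * Real.exp p.2 + (n : ℝ) * ((n : ℝ) + 1) / 2) *
     (Real.exp p.2 + 1) ^ (-n - 1),
   Real.exp (-(n : ℝ) * p.1 + ((n : ℝ) - 1) * p.2) *
     ((n : ℝ) * Real.exp p.2 + (n : ℝ) * ((n : ℝ) + 1) / 2) *
     (Real.exp p.2 + 1) ^ (-n))


noncomputable def Ft (n : ℤ) : ℝ → ℝ := fun t => Real.exp (-(n : ℝ) * t)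

noncomputable def Gt (n : ℤ) : ℝ → ℝ := fun x =>
  Real.exp (((n : ℝ) - 1) * x) *
    (Real.exp (2 * x) + ((n : ℝ) + 1) * Real.exp x + (n : ℝ) * ((n : ℝ) + 1) / 2) *
    (Real.exp x + 1) ^ (-n - 1)

noncomputable def Gx (n : ℤ) : ℝ → ℝ := fun x =>
  Real.exp (((n : ℝ) - 1) * x) *
    ((n : ℝ) * Real.exp x + (n : ℝ) * ((n : ℝ) + 1) / 2) *
    (Real.exp x + 1) ^ (-n)

lemma W3_eq (n : ℤ) :
    W3field n = fun p : ℝ × ℝ => (Ft n p.1 * Gt n p.2, Ft n p.1 * Gx n p.2) := by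
  funext p
  simp only [W3field, Ft, Gt, Gx, Real.exp_add, Prod.mk.injEq]
  constructor <;> ring

lemma hasFDerivAt_split {F G : ℝ → ℝ} {F' G' : ℝ} {p : ℝ × ℝ}
    (hF : HasDerivAt F F' p.1) (hG : HasDerivAt G G' p.2) :
    HasFDerivAt (fun q : ℝ × ℝ => F q.1 * G q.2)
      ((F' * G p.2) • ContinuousLinearMap.fst ℝ ℝ ℝ
        + (F p.1 * G') • ContinuousLinearMap.snd ℝ ℝ ℝ) p := by
  have h1 : HasFDerivAt (fun q : ℝ × ℝ => F q.1)
      (F' • ContinuousLinearMap.fst ℝ ℝ ℝ) p :=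
    hF.comp_hasFDerivAt p hasFDerivAt_fst
  have h2 : HasFDerivAt (fun q : ℝ × ℝ => G q.2)
      (G' • ContinuousLinearMap.snd ℝ ℝ ℝ) p :=
    hG.comp_hasFDerivAt p hasFDerivAt_snd
  have h := h1.mul h2
  refine h.congr_fderiv ?_
  ext v <;> simp <;> ring

noncomputable def Gt' (n : ℤ) : ℝ → ℝ := fun x =>
  Real.exp (((n : ℝ) - 1) * x) *
      (((n : ℝ) - 1) * (Real.exp (2 * x) + ((n : ℝ) + 1) * Real.exp x + (n : ℝ) * ((n : ℝ) + 1) / 2)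
        + (2 * Real.exp (2 * x) + ((n : ℝ) + 1) * Real.exp x)) *
      (Real.exp x + 1) ^ (-n - 1)
    + Real.exp (((n : ℝ) - 1) * x) *
      (Real.exp (2 * x) + ((n : ℝ) + 1) * Real.exp x + (n : ℝ) * ((n : ℝ) + 1) / 2) *
      ((-(n : ℝ) - 1) * (Real.exp x + 1) ^ (-n - 2) * Real.exp x)

noncomputable def Gx' (n : ℤ) : ℝ → ℝ := fun x =>
  Real.exp (((n : ℝ) - 1) * x) *
      (((n : ℝ) - 1) * ((n : ℝ) * Real.exp x + (n : ℝ) * ((n : ℝ) + 1) / 2)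
        + (n : ℝ) * Real.exp x) *
      (Real.exp x + 1) ^ (-n)
    + Real.exp (((n : ℝ) - 1) * x) *
      ((n : ℝ) * Real.exp x + (n : ℝ) * ((n : ℝ) + 1) / 2) *
      ((-(n : ℝ)) * (Real.exp x + 1) ^ (-n - 1) * Real.exp x)

lemma hasDerivAt_Ft (n : ℤ) (t : ℝ) : HasDerivAt (Ft n) (-(n : ℝ) * Ft n t) t := by
  have h := ((hasDerivAt_id t).const_mul (-(n : ℝ))).exp
  convert h using 1
  · funext x; simp [Ft]
  simp [Ft]; ring

lemma hasDerivAt_Gt (n : ℤ) (x : ℝ) : HasDerivAt (Gt n) (Gt' n x) x := by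
  have hs : Real.exp x + 1 ≠ 0 := by positivity
  have h1 : HasDerivAt (fun x : ℝ => Real.exp (((n : ℝ) - 1) * x))
      (Real.exp (((n : ℝ) - 1) * x) * (((n : ℝ) - 1) * 1)) x :=
    ((hasDerivAt_id x).const_mul ((n : ℝ) - 1)).exp
  have h2 : HasDerivAt (fun x : ℝ =>
      Real.exp (2 * x) + ((n : ℝ) + 1) * Real.exp x + (n : ℝ) * ((n : ℝ) + 1) / 2)
      (Real.exp (2 * x) * (2 * 1) + ((n : ℝ) + 1) * Real.exp x) x :=
    ((((hasDerivAt_id x).const_mul (2 : ℝ)).exp).add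
      ((Real.hasDerivAt_exp x).const_mul ((n : ℝ) + 1))).add_const _
  have h3 : HasDerivAt (fun x : ℝ => (Real.exp x + 1) ^ (-n - 1))
      ((((-n - 1 : ℤ) : ℝ) * (Real.exp x + 1) ^ (-n - 1 - 1)) * Real.exp x) x :=
    HasDerivAt.comp (h₂ := fun y : ℝ => y ^ (-n - 1)) x (hasDerivAt_zpow (-n - 1) _ (Or.inl hs))
      ((Real.hasDerivAt_exp x).add_const 1)
  have h := (h1.mul h2).mul h3
  refine h.congr_deriv ?_
  simp only [Gt', Pi.mul_apply, show (-n - 1 - 1 : ℤ) = -n - 2 by ring]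
  push_cast
  ring

lemma hasDerivAt_Gx (n : ℤ) (x : ℝ) : HasDerivAt (Gx n) (Gx' n x) x := by
  have hs : Real.exp x + 1 ≠ 0 := by positivity
  have h1 : HasDerivAt (fun x : ℝ => Real.exp (((n : ℝ) - 1) * x))
      (Real.exp (((n : ℝ) - 1) * x) * (((n : ℝ) - 1) * 1)) x :=
    ((hasDerivAt_id x).const_mul ((n : ℝ) - 1)).exp
  have h2 : HasDerivAt (fun x : ℝ => (n : ℝ) * Real.exp x + (n : ℝ) * ((n : ℝ) + 1) / 2)
      ((n : ℝ) * Real.exp x) x :=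
    ((Real.hasDerivAt_exp x).const_mul ((n : ℝ))).add_const _
  have h3 : HasDerivAt (fun x : ℝ => (Real.exp x + 1) ^ (-n))
      ((((-n : ℤ) : ℝ) * (Real.exp x + 1) ^ (-n - 1)) * Real.exp x) x :=
    HasDerivAt.comp (h₂ := fun y : ℝ => y ^ (-n)) x (hasDerivAt_zpow (-n) _ (Or.inl hs))
      ((Real.hasDerivAt_exp x).add_const 1)
  have h := (h1.mul h2).mul h3
  refine h.congr_deriv ?_
  simp only [Gx', Pi.mul_apply]
  push_cast
  ring

lemma hasFDerivAt_W3 (n : ℤ) (p : ℝ × ℝ) :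
    HasFDerivAt (W3field n)
      (((-(n : ℝ) * Ft n p.1 * Gt n p.2) • ContinuousLinearMap.fst ℝ ℝ ℝ
          + (Ft n p.1 * Gt' n p.2) • ContinuousLinearMap.snd ℝ ℝ ℝ).prod
        ((-(n : ℝ) * Ft n p.1 * Gx n p.2) • ContinuousLinearMap.fst ℝ ℝ ℝ
          + (Ft n p.1 * Gx' n p.2) • ContinuousLinearMap.snd ℝ ℝ ℝ)) p := by
  rw [W3_eq]
  exact (hasFDerivAt_split (hasDerivAt_Ft n p.1) (hasDerivAt_Gt n p.2)).prodMk
    (hasFDerivAt_split (hasDerivAt_Ft n p.1) (hasDerivAt_Gx n p.2))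

lemma fderiv_W3_apply (n : ℤ) (p v : ℝ × ℝ) :
    fderiv ℝ (W3field n) p v =
      (-(n : ℝ) * Ft n p.1 * Gt n p.2 * v.1 + Ft n p.1 * Gt' n p.2 * v.2,
       -(n : ℝ) * Ft n p.1 * Gx n p.2 * v.1 + Ft n p.1 * Gx' n p.2 * v.2) := by
  rw [(hasFDerivAt_W3 n p).fderiv]
  simp [smul_eq_mul]


set_option maxHeartbeats 2000000 in
/-- The family `(W3field n)` is a realization of the Witt algebra on `ℝ²`:
`[L_m, L_n] = (m - n) L_{m+n}` for all `m, n ∈ ℤ`. -/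
theorem W3_realization :
    ∀ m n : ℤ, lieBracket2 (W3field m) (W3field n)
      = fun p => ((m : ℝ) - (n : ℝ)) • W3field (m + n) p := by
  intro m n
  funext p
  have hs : (Real.exp p.2 + 1 : ℝ) ≠ 0 := by positivity
  have h2x : Real.exp (2 * p.2) = Real.exp p.2 * Real.exp p.2 := by
    rw [← Real.exp_add]; congr 1; ring
  have hE : Real.exp (-((m : ℝ) + (n : ℝ)) * p.1 + ((m : ℝ) + (n : ℝ) - 1) * p.2)
      = Real.exp (-(m : ℝ) * p.1) * Real.exp (((m : ℝ) - 1) * p.2)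
        * (Real.exp (-(n : ℝ) * p.1) * Real.exp (((n : ℝ) - 1) * p.2)) * Real.exp p.2 := by
    rw [← Real.exp_add, ← Real.exp_add, ← Real.exp_add, ← Real.exp_add]; congr 1; ring
  have hEm : ∀ k : ℤ, Real.exp (-(k : ℝ) * p.1 + ((k : ℝ) - 1) * p.2)
      = Real.exp (-(k : ℝ) * p.1) * Real.exp (((k : ℝ) - 1) * p.2) := by
    intro k; rw [← Real.exp_add]
  have key : ∀ a b : ℤ, a = b → (Real.exp p.2 + 1) ^ a = (Real.exp p.2 + 1) ^ b :=
    fun a b h => by rw [h]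
  have z : ∀ k : ℤ, (Real.exp p.2 + 1) ^ (-k - 1)
      = (Real.exp p.2 + 1) ^ (-k - 2) * (Real.exp p.2 + 1) := by
    intro k
    rw [key (-k - 1) ((-k - 2) + 1) (by ring), zpow_add₀ hs, zpow_one]
  have z2 : ∀ k : ℤ, (Real.exp p.2 + 1) ^ (-k)
      = (Real.exp p.2 + 1) ^ (-k - 2) * ((Real.exp p.2 + 1) * (Real.exp p.2 + 1)) := by
    intro k
    rw [key (-k) ((-k - 2) + 1 + 1) (by ring), zpow_add₀ hs, zpow_add₀ hs, zpow_one]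
    ring
  have z3 : (Real.exp p.2 + 1) ^ (-(m + n) - 1)
      = (Real.exp p.2 + 1) ^ (-m - 2) * (Real.exp p.2 + 1) ^ (-n - 2)
        * ((Real.exp p.2 + 1) * (Real.exp p.2 + 1) * (Real.exp p.2 + 1)) := by
    rw [key (-(m + n) - 1) ((-m - 2) + (-n - 2) + 1 + 1 + 1) (by ring),
      zpow_add₀ hs, zpow_add₀ hs, zpow_add₀ hs, zpow_add₀ hs, zpow_one]
    ring
  have z4 : (Real.exp p.2 + 1) ^ (-(m + n))
      = (Real.exp p.2 + 1) ^ (-m - 2) * (Real.exp p.2 + 1) ^ (-n - 2)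
        * ((Real.exp p.2 + 1) * (Real.exp p.2 + 1) * (Real.exp p.2 + 1) * (Real.exp p.2 + 1)) := by
    rw [key (-(m + n)) ((-m - 2) + (-n - 2) + 1 + 1 + 1 + 1) (by ring),
      zpow_add₀ hs, zpow_add₀ hs, zpow_add₀ hs, zpow_add₀ hs, zpow_add₀ hs, zpow_one]
    ring
  simp only [lieBracket2, fderiv_W3_apply, W3field, Ft, Gt, Gx, Gt', Gx',
    Prod.mk_sub_mk, Prod.smul_mk, smul_eq_mul, Prod.mk.injEq]
  refine ⟨?_, ?_⟩ <;>
  · push_cast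
    simp only [hEm m, hEm n, h2x, hE, z3, z4, z m, z n, z2 m, z2 n]
    generalize (Real.exp p.2 + 1) ^ (-m - 2) = P
    generalize (Real.exp p.2 + 1) ^ (-n - 2) = Q
    ring
end

section
/- The family of vector fields on ℝ² given by L_n = e^{−nt+(n−1)x}(e^{x} + n)(e^{x}+1)^{−n} ∂_t + n e^{−nt+(n−1)x}(e^{x}+1)^{1−n} ∂_x (n ∈ ℤ) is a realization of the Witt algebra: [L_m, L_n] = (m−n)L_{m+n} for all m, n ∈ ℤ. (This is the realization 𝔚₅ of Theorem 1 with the '+' choice of sign, for which the coefficients are smooth on all of ℝ².) -/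
/-- The realization `𝔚₅` (with the '+' choice of sign):
`L_n = e^{-nt+(n-1)x}(e^x + n)(e^x+1)^{-n} ∂_t + n e^{-nt+(n-1)x}(e^x+1)^{1-n} ∂_x`. -/
noncomputable def W5field (n : ℤ) : ℝ × ℝ → ℝ × ℝ := fun p =>
  (Real.exp (-(n : ℝ) * p.1 + ((n : ℝ) - 1) * p.2) * (Real.exp p.2 + (n : ℝ)) *
     (Real.exp p.2 + 1) ^ (-n),
   (n : ℝ) * Real.exp (-(n : ℝ) * p.1 + ((n : ℝ) - 1) * p.2) *
     (Real.exp p.2 + 1) ^ (1 - n))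

open ContinuousLinearMap in
/-- The explicit total derivative of `W5field k` at `p`. -/
noncomputable def W5deriv (k : ℤ) (p : ℝ × ℝ) : ℝ × ℝ →L[ℝ] ℝ × ℝ :=
  let a : ℝ := Real.exp (-(k : ℝ) * p.1 + ((k : ℝ) - 1) * p.2)
  let e : ℝ := Real.exp p.2
  let L : ℝ × ℝ →L[ℝ] ℝ := (-(k:ℝ)) • (fst ℝ ℝ ℝ) + ((k:ℝ) - 1) • (snd ℝ ℝ ℝ)
  ((a * (e + (k:ℝ))) • ((↑(-k) * (e + 1) ^ (-k - 1)) • (e • (snd ℝ ℝ ℝ))) +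
      ((e + 1) ^ (-k)) • (a • (e • (snd ℝ ℝ ℝ)) + (e + (k:ℝ)) • (a • L))).prod
    (((k:ℝ) * a) • ((↑(1 - k) * (e + 1) ^ (1 - k - 1)) • (e • (snd ℝ ℝ ℝ))) +
      ((e + 1) ^ (1 - k)) • ((k:ℝ) • (a • L)))

open ContinuousLinearMap Real in
lemma W5_hasFDerivAt (k : ℤ) (p : ℝ × ℝ) :
    HasFDerivAt (W5field k) (W5deriv k p) p := by
  have hw0 : Real.exp p.2 + 1 ≠ 0 := by positivity
  have hl : HasFDerivAt (fun q : ℝ × ℝ => -(k : ℝ) * q.1 + ((k : ℝ) - 1) * q.2)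
      ((-(k:ℝ)) • (fst ℝ ℝ ℝ) + ((k:ℝ) - 1) • (snd ℝ ℝ ℝ)) p :=
    ((hasFDerivAt_fst (p := p)).const_mul _).add ((hasFDerivAt_snd (p := p)).const_mul _)
  have he := hl.exp
  have hwz : HasFDerivAt (fun q : ℝ × ℝ => Real.exp q.2 + 1)
      (Real.exp p.2 • (snd ℝ ℝ ℝ)) p := (hasFDerivAt_snd (p := p)).exp.add_const 1
  have hz1 : HasFDerivAt (fun q : ℝ × ℝ => (Real.exp q.2 + 1) ^ (-k))
      ((↑(-k) * (Real.exp p.2 + 1) ^ (-k - 1)) • (Real.exp p.2 • (snd ℝ ℝ ℝ))) p :=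
    by have := (hasDerivAt_zpow (-k) (Real.exp p.2 + 1) (Or.inl hw0)).comp_hasFDerivAt p hwz; exact this
  have hz2 : HasFDerivAt (fun q : ℝ × ℝ => (Real.exp q.2 + 1) ^ (1 - k))
      ((↑(1 - k) * (Real.exp p.2 + 1) ^ (1 - k - 1)) • (Real.exp p.2 • (snd ℝ ℝ ℝ))) p :=
    by have := (hasDerivAt_zpow (1 - k) (Real.exp p.2 + 1) (Or.inl hw0)).comp_hasFDerivAt p hwz; exact this
  have hen : HasFDerivAt (fun q : ℝ × ℝ => Real.exp q.2 + (k:ℝ))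
      (Real.exp p.2 • (snd ℝ ℝ ℝ)) p := (hasFDerivAt_snd (p := p)).exp.add_const _
  exact ((he.mul hen).mul hz1).prodMk ((he.const_mul (k:ℝ)).mul hz2)

/-- The family `(W5field n)` is a realization of the Witt algebra on `ℝ²`:
`[L_m, L_n] = (m - n) L_{m+n}` for all `m, n ∈ ℤ`. -/
theorem W5_realization :
    ∀ m n : ℤ, lieBracket2 (W5field m) (W5field n)
      = fun p => ((m : ℝ) - (n : ℝ)) • W5field (m + n) p := by
  intro m n
  funext p
  simp only [lieBracket2, (W5_hasFDerivAt m p).fderiv, (W5_hasFDerivAt n p).fderiv]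
  simp only [W5deriv, ContinuousLinearMap.add_apply, ContinuousLinearMap.smul_apply,
    ContinuousLinearMap.prod_apply, ContinuousLinearMap.coe_fst',
    ContinuousLinearMap.coe_snd', smul_eq_mul, Prod.smul_mk, Prod.mk_sub_mk,
    W5field, Prod.mk.injEq]
  have hw0 : Real.exp p.2 + 1 ≠ 0 := by positivity
  have he0 : Real.exp p.2 ≠ 0 := Real.exp_ne_zero _
  have eA : ∀ c : ℝ, Real.exp (-c * p.1 + (c - 1) * p.2)
      = Real.exp (-c * p.1) * Real.exp (c * p.2) * (Real.exp p.2)⁻¹ := by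
    intro c
    rw [show -c * p.1 + (c - 1) * p.2 = -c * p.1 + (c * p.2 + -p.2) by ring,
      Real.exp_add, Real.exp_add, Real.exp_neg]
    ring
  have z4 : ∀ k : ℤ, (Real.exp p.2 + 1) ^ (1 - k - 1) = (Real.exp p.2 + 1) ^ (-k) := by
    intro k; congr 1; ring
  have z1 : ∀ k : ℤ, (Real.exp p.2 + 1) ^ (1 - k)
      = (Real.exp p.2 + 1) * (Real.exp p.2 + 1) ^ (-k) := by
    intro k
    rw [show (1 : ℤ) - k = 1 + -k by ring, zpow_add₀ hw0, zpow_one]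
  have z2 : ∀ k : ℤ, (Real.exp p.2 + 1) ^ (-k - 1)
      = (Real.exp p.2 + 1) ^ (-k) * (Real.exp p.2 + 1)⁻¹ := by
    intro k
    rw [zpow_sub₀ hw0, zpow_one]
    ring
  have z3 : (Real.exp p.2 + 1) ^ (-(m + n))
      = (Real.exp p.2 + 1) ^ (-m) * (Real.exp p.2 + 1) ^ (-n) := by
    rw [show -(m + n) = -m + -n by ring, zpow_add₀ hw0]
  have eS : Real.exp (-((m:ℝ) + (n:ℝ)) * p.1)
      = Real.exp (-(m:ℝ) * p.1) * Real.exp (-(n:ℝ) * p.1) := by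
    rw [← Real.exp_add]
    exact congrArg Real.exp (by ring)
  have eT : Real.exp (((m:ℝ) + (n:ℝ)) * p.2)
      = Real.exp ((m:ℝ) * p.2) * Real.exp ((n:ℝ) * p.2) := by
    rw [← Real.exp_add]
    exact congrArg Real.exp (by ring)
  constructor <;>
  · push_cast
    simp only [eA, z4, z1, z2, z3, eS, eT]
    field_simp
    ring
end

section
/- For γ = −1, the family of vector fields on ℝ² given by L_n = e^{−nt} ∂_t + γ e^{−nt}[e^{nx} − (e^{x}−γ)^{n}](e^{x}−γ)^{1−n} ∂_x, i.e. L_n = e^{−nt} ∂_t − e^{−nt}[e^{nx} − (e^{x}+1)^{n}](e^{x}+1)^{1−n} ∂_x (n ∈ ℤ), is a realization of the Witt algebra: [L_m, L_n] = (m−n)L_{m+n} for all m, n ∈ ℤ. (This is the realization 𝔚₆ of Theorem 1 with γ = −1, for which the coefficients are smooth on all of ℝ².) -/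
/-- The realization `𝔚₆` with `γ = -1`:
`L_n = e^{-nt} ∂_t - e^{-nt}[e^{nx} - (e^x+1)^n](e^x+1)^{1-n} ∂_x`. -/
noncomputable def W6field (n : ℤ) : ℝ × ℝ → ℝ × ℝ := fun p =>
  (Real.exp (-(n : ℝ) * p.1),
   -(Real.exp (-(n : ℝ) * p.1) *
      (Real.exp ((n : ℝ) * p.2) - (Real.exp p.2 + 1) ^ n) * (Real.exp p.2 + 1) ^ (1 - n)))

noncomputable def Kf (n : ℤ) (x : ℝ) : ℝ :=
  -((Real.exp ((n : ℝ) * x) - (Real.exp x + 1) ^ n) * (Real.exp x + 1) ^ (1 - n))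

noncomputable def Kd (n : ℤ) (x : ℝ) : ℝ :=
  -(((n : ℝ) * Real.exp ((n : ℝ) * x) - (n : ℝ) * (Real.exp x + 1) ^ (n - 1) * Real.exp x) *
      (Real.exp x + 1) ^ (1 - n) +
    (Real.exp ((n : ℝ) * x) - (Real.exp x + 1) ^ n) *
      (((1 - n : ℤ) : ℝ) * (Real.exp x + 1) ^ (1 - n - 1) * Real.exp x))

lemma W6_eq (n : ℤ) : W6field n
    = fun p => (Real.exp (-(n : ℝ) * p.1), Real.exp (-(n : ℝ) * p.1) * Kf n p.2) := by
  funext p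
  simp only [W6field, Kf, Prod.mk.injEq]
  exact ⟨trivial, by ring⟩

lemma hasDerivAt_Kf (n : ℤ) (x : ℝ) : HasDerivAt (Kf n) (Kd n x) x := by
  have hS : (0:ℝ) < Real.exp x + 1 := by positivity
  have hS' : HasDerivAt (fun x => Real.exp x + 1) (Real.exp x) x :=
    (Real.hasDerivAt_exp x).add_const 1
  have h1 : HasDerivAt (fun x => Real.exp ((n : ℝ) * x)) ((n : ℝ) * Real.exp ((n : ℝ) * x)) x := by
    have := ((hasDerivAt_id x).const_mul (n : ℝ)).exp
    simpa [mul_comm] using this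
  have h2 : HasDerivAt (fun x => (Real.exp x + 1) ^ n)
      ((n : ℝ) * (Real.exp x + 1) ^ (n - 1) * Real.exp x) x := by
    simpa [Function.comp_def] using (hasDerivAt_zpow n (Real.exp x + 1) (Or.inl hS.ne')).comp x hS'
  have h3 : HasDerivAt (fun x => (Real.exp x + 1) ^ (1 - n))
      (((1 - n : ℤ) : ℝ) * (Real.exp x + 1) ^ (1 - n - 1) * Real.exp x) x := by
    simpa [Function.comp_def] using (hasDerivAt_zpow (1 - n) (Real.exp x + 1) (Or.inl hS.ne')).comp x hS'
  exact (((h1.sub h2).mul h3)).neg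

lemma hasFDerivAt_W6 (n : ℤ) (p : ℝ × ℝ) :
    HasFDerivAt (W6field n)
      (((-(n : ℝ) * Real.exp (-(n : ℝ) * p.1)) • ContinuousLinearMap.fst ℝ ℝ ℝ).prod
        ((Real.exp (-(n : ℝ) * p.1)) • ((Kd n p.2) • ContinuousLinearMap.snd ℝ ℝ ℝ)
          + (Kf n p.2) • ((-(n : ℝ) * Real.exp (-(n : ℝ) * p.1)) • ContinuousLinearMap.fst ℝ ℝ ℝ))) p := by
  rw [W6_eq]
  have hφ : HasDerivAt (fun t => Real.exp (-(n : ℝ) * t))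
      (-(n : ℝ) * Real.exp (-(n : ℝ) * p.1)) p.1 := by
    have := ((hasDerivAt_id p.1).const_mul (-(n : ℝ))).exp
    simpa [mul_comm] using this
  have hF1 : HasFDerivAt (fun q : ℝ × ℝ => Real.exp (-(n : ℝ) * q.1))
      ((-(n : ℝ) * Real.exp (-(n : ℝ) * p.1)) • ContinuousLinearMap.fst ℝ ℝ ℝ) p :=
    hφ.comp_hasFDerivAt p hasFDerivAt_fst
  have hK : HasFDerivAt (fun q : ℝ × ℝ => Kf n q.2)
      ((Kd n p.2) • ContinuousLinearMap.snd ℝ ℝ ℝ) p :=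
    (hasDerivAt_Kf n p.2).comp_hasFDerivAt p hasFDerivAt_snd
  exact hF1.prodMk (hF1.mul hK)

lemma fderiv_W6_apply (n : ℤ) (p q : ℝ × ℝ) :
    fderiv ℝ (W6field n) p q =
      (-(n : ℝ) * Real.exp (-(n : ℝ) * p.1) * q.1,
       Real.exp (-(n : ℝ) * p.1) * (Kd n p.2 * q.2)
         + Kf n p.2 * (-(n : ℝ) * Real.exp (-(n : ℝ) * p.1) * q.1)) := by
  rw [(hasFDerivAt_W6 n p).fderiv]
  simp [ContinuousLinearMap.prod_apply]

lemma exp_zpow (n : ℤ) (x : ℝ) : Real.exp ((n : ℝ) * x) = (Real.exp x) ^ n := by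
  rw [← Real.rpow_intCast, Real.rpow_def_of_pos (Real.exp_pos x), Real.log_exp, mul_comm]

lemma exp_neg_zpow (n : ℤ) (t : ℝ) : Real.exp (-(n : ℝ) * t) = (Real.exp (-t)) ^ n := by
  rw [show -(n : ℝ) * t = (n : ℝ) * (-t) by ring, exp_zpow]


/-- The family `(W6field n)` is a realization of the Witt algebra on `ℝ²`:
`[L_m, L_n] = (m - n) L_{m+n}` for all `m, n ∈ ℤ`. -/
theorem W6_realization :
    ∀ m n : ℤ, lieBracket2 (W6field m) (W6field n)
      = fun p => ((m : ℝ) - (n : ℝ)) • W6field (m + n) p := by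
  intro m n
  funext p
  obtain ⟨t, x⟩ := p
  have hb : (0:ℝ) < Real.exp x := Real.exp_pos x
  have ha : (0:ℝ) < Real.exp (-t) := Real.exp_pos _
  simp only [lieBracket2, fderiv_W6_apply, W6field, Prod.smul_mk, smul_eq_mul,
    Prod.mk_sub_mk]
  simp only [Kf, Kd, exp_neg_zpow, exp_zpow]
  set a := Real.exp (-t) with hadef
  set b := Real.exp x with hbdef
  have hs : (0:ℝ) < b + 1 := by positivity
  have h1n : (1 - n - 1 : ℤ) = -n := by ring
  have h1m : (1 - m - 1 : ℤ) = -m := by ring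
  rw [h1n, h1m]
  have ha' := ha.ne'
  have hs' := hs.ne'
  simp only [Prod.mk.injEq]
  constructor
  · rw [zpow_add₀ ha']
    ring
  · push_cast
    simp only [zpow_add₀ ha', zpow_add₀ hs', zpow_add₀ hb.ne', zpow_sub₀ hs',
      zpow_neg, zpow_one]
    field_simp
    ring
end

section
/- The realizations 𝔚₁ and 𝔚₂ (with α = 0) of the Witt algebra in ℝ² are inequivalent: there is no diffeomorphism Φ of ℝ² such that Φ_* L_n = L̃_n for all n ∈ ℤ, where L_n(t,x) = (e^{−nt}, 0) (i.e. L_n = e^{−nt}∂_t) and L̃_n(t,x) = (e^{−nt}, n e^{−nt}) (i.e. L̃_n = e^{−nt}∂_t + n e^{−nt}∂_x). -/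
/-- The realization `𝔚₁` on `ℝ²`: `L_n = e^{-nt} ∂_t`. -/
noncomputable def W1field (n : ℤ) : ℝ × ℝ → ℝ × ℝ := fun p =>
  (Real.exp (-(n : ℝ) * p.1), 0)

/-- The realization `𝔚₂` with `α = 0` on `ℝ²`: `L̃_n = e^{-nt} ∂_t + n e^{-nt} ∂_x`. -/
noncomputable def W2field0 (n : ℤ) : ℝ × ℝ → ℝ × ℝ := fun p =>
  (Real.exp (-(n : ℝ) * p.1), (n : ℝ) * Real.exp (-(n : ℝ) * p.1))

/-- The realizations `𝔚₁` and `𝔚₂` (with `α = 0`) of the Witt algebra in `ℝ²` are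
inequivalent: there is no `C^∞` diffeomorphism `Φ` of `ℝ²` (with `C^∞` inverse `Ψ`)
whose pushforward `(Φ_* X)(p) = (DΦ)(Φ⁻¹(p))(X(Φ⁻¹(p)))` maps `L_n` to `L̃_n` for all
`n ∈ ℤ`. -/
theorem W1_W2_inequivalent :
    ¬ ∃ Φ Ψ : ℝ × ℝ → ℝ × ℝ,
        ContDiff ℝ (⊤ : ℕ∞) Φ ∧ ContDiff ℝ (⊤ : ℕ∞) Ψ ∧
        Function.LeftInverse Ψ Φ ∧ Function.RightInverse Ψ Φ ∧
        ∀ (n : ℤ) (p : ℝ × ℝ),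
          fderiv ℝ Φ (Ψ p) (W1field n (Ψ p)) = W2field0 n p := by
  rintro ⟨Φ, Ψ, -, -, -, -, h⟩
  set q := Ψ (0, 0) with hq
  have h0 := h 0 (0, 0)
  have h1 := h 1 (0, 0)
  simp only [W1field, W2field0, Int.cast_zero, Int.cast_one, neg_zero, zero_mul, neg_mul,
    one_mul, mul_zero, Real.exp_zero] at h0 h1
  -- h0 : fderiv ℝ Φ q (1, 0) = (1, 0)
  -- h1 : fderiv ℝ Φ q (Real.exp (-q.1), 0) = (1, 1)
  have key : (Real.exp (-q.1), (0:ℝ)) = Real.exp (-q.1) • ((1:ℝ), (0:ℝ)) := by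
    simp [Prod.ext_iff]
  rw [key, map_smul, h0] at h1
  have := congrArg Prod.snd h1
  simp at this
end

section
/- Let L_0 = ∂_t, L_{−1} = e^{t}∂_t, L_1 = e^{−t}∂_t and C = ∂_u be vector fields on ℝ³ (coordinates (t,x,u)). If Q is a smooth vector field on ℝ³ satisfying [L_0, Q] = −2Q, [L_{−1}, Q] = −3L_1 and [Q, C] = 0, then Q = e^{−2t}∂_t. (Step of Case 1 of Section 4: the operator L_2 is uniquely determined.) -/
/-- Let `L_0 = ∂_t`, `L_{-1} = e^t ∂_t`, `L_1 = e^{-t} ∂_t` and `C = ∂_u` on `ℝ³`.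
If a smooth vector field `Q` satisfies `[L_0, Q] = -2Q`, `[L_{-1}, Q] = -3 L_1` and
`[Q, C] = 0`, then `Q = e^{-2t} ∂_t`. -/
theorem L2_unique_case1 (Q : ℝ × ℝ × ℝ → ℝ × ℝ × ℝ)
    (hQ : ContDiff ℝ (⊤ : ℕ∞) Q)
    (h0 : lieBracket3 (fun _ => (1, 0, 0)) Q = fun p => (-2 : ℝ) • Q p)
    (h1 : lieBracket3 (fun p => (Real.exp p.1, 0, 0)) Q
      = fun p => (-3 * Real.exp (-p.1), 0, 0))
    (h2 : lieBracket3 Q (fun _ => (0, 0, 1)) = fun _ => 0) :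
    Q = fun p => (Real.exp (-2 * p.1), 0, 0) := by
  funext p
  -- derivative of the coefficient field of L₋₁
  have hfst : HasFDerivAt (fun q : ℝ × ℝ × ℝ => (Real.exp q.1, ((0 : ℝ), (0 : ℝ))))
      (((Real.exp p.1) • (ContinuousLinearMap.fst ℝ ℝ (ℝ × ℝ))).prod 0) p :=
    HasFDerivAt.prodMk (HasFDerivAt.exp (hasFDerivAt_fst (𝕜 := ℝ) (E := ℝ) (F := ℝ × ℝ) (p := p)))
      (hasFDerivAt_const _ _)
  have hX := hfst.fderiv
  have e0 := congrFun h0 p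
  have e1 := congrFun h1 p
  simp only [lieBracket3, fderiv_const_apply, ContinuousLinearMap.zero_apply,
    sub_zero] at e0 e1
  -- e0 : fderiv ℝ Q p (1, 0, 0) = (-2) • Q p
  rw [hX] at e1
  have hsm : ((Real.exp p.1, (0 : ℝ), (0 : ℝ)) : ℝ × ℝ × ℝ)
      = Real.exp p.1 • ((1 : ℝ), (0 : ℝ), (0 : ℝ)) := by
    simp [Prod.smul_def]
  rw [hsm, (fderiv ℝ Q p).map_smul, e0] at e1
  simp only [ContinuousLinearMap.prod_apply, ContinuousLinearMap.smul_apply,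
    ContinuousLinearMap.coe_fst', ContinuousLinearMap.zero_apply, smul_eq_mul,
    Prod.ext_iff, Prod.smul_def, Prod.fst_sub, Prod.snd_sub, Prod.smul_fst,
    Prod.smul_snd, Prod.fst_zero, Prod.snd_zero] at e1
  obtain ⟨ea, eb, ec⟩ := e1
  have hne : Real.exp p.1 ≠ 0 := Real.exp_ne_zero _
  have hkey : Real.exp p.1 * Real.exp (-2 * p.1) = Real.exp (-p.1) := by
    rw [← Real.exp_add]; ring_nf
  refine Prod.ext ?_ (Prod.ext ?_ ?_)
  · -- first component
    have : Real.exp p.1 * (Q p).1 = Real.exp p.1 * Real.exp (-2 * p.1) := by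
      rw [hkey]; nlinarith [ea]
    exact mul_left_cancel₀ hne this
  · have : Real.exp p.1 * (Q p).2.1 = Real.exp p.1 * 0 := by nlinarith [eb]
    simpa using mul_left_cancel₀ hne this
  · have : Real.exp p.1 * (Q p).2.2 = Real.exp p.1 * 0 := by nlinarith [ec]
    simpa using mul_left_cancel₀ hne this
end

section
/- There is no smooth vector field Q on ℝ³ (coordinates (t,x,u)) satisfying simultaneously [∂_t, Q] = 2Q, [e^{−t}∂_t, Q] = 3 e^{t}∂_t and [e^{−2t}∂_t, Q] = 4∂_t + (1/2)∂_u. (This is the incompatibility established in Case 1 of Section 4: the realization ⟨∂_t, e^{−t}∂_t, e^{t}∂_t, e^{−2t}∂_t⟩ with central element C = ∂_u admits no operator L_{−2} satisfying the Virasoro relations [L_0,L_{−2}] = 2L_{−2}, [L_1,L_{−2}] = 3L_{−1}, [L_2,L_{−2}] = 4L_0 + C/2; hence this triple cannot be extended to a realization of the Virasoro algebra with nonzero central element.) -/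
/-- There is no smooth vector field `Q` on `ℝ³` satisfying simultaneously
`[∂_t, Q] = 2Q`, `[e^{-t}∂_t, Q] = 3 e^t ∂_t` and `[e^{-2t}∂_t, Q] = 4∂_t + (1/2)∂_u`. -/
theorem no_Lminus2_case1 :
    ¬ ∃ Q : ℝ × ℝ × ℝ → ℝ × ℝ × ℝ, ContDiff ℝ (⊤ : ℕ∞) Q ∧
        lieBracket3 (fun _ => (1, 0, 0)) Q = (fun p => (2 : ℝ) • Q p) ∧
        lieBracket3 (fun p => (Real.exp (-p.1), 0, 0)) Q
          = (fun p => (3 * Real.exp p.1, 0, 0)) ∧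
        lieBracket3 (fun p => (Real.exp (-2 * p.1), 0, 0)) Q
          = (fun _ => (4, 0, 1 / 2)) := by
  rintro ⟨Q, -, -, h2, h3⟩
  set p : ℝ × ℝ × ℝ := (0, 0, 0) with hp
  have hg2 : DifferentiableAt ℝ (fun q : ℝ × ℝ × ℝ => Real.exp (-q.1)) p :=
    (Real.differentiable_exp.comp differentiable_fst.neg).differentiableAt
  have hg3 : DifferentiableAt ℝ (fun q : ℝ × ℝ × ℝ => Real.exp (-2 * q.1)) p :=
    (Real.differentiable_exp.comp ((differentiable_const (-2 : ℝ)).mul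
      differentiable_fst)).differentiableAt
  have hX2 : fderiv ℝ (fun q : ℝ × ℝ × ℝ => ((Real.exp (-q.1), 0, 0) : ℝ × ℝ × ℝ)) p
      = (fderiv ℝ (fun q : ℝ × ℝ × ℝ => Real.exp (-q.1)) p).prod 0 :=
    HasFDerivAt.fderiv (HasFDerivAt.prodMk hg2.hasFDerivAt (hasFDerivAt_const ((0, 0) : ℝ × ℝ) p))
  have hX3 : fderiv ℝ (fun q : ℝ × ℝ × ℝ => ((Real.exp (-2 * q.1), 0, 0) : ℝ × ℝ × ℝ)) p
      = (fderiv ℝ (fun q : ℝ × ℝ × ℝ => Real.exp (-2 * q.1)) p).prod 0 :=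
    HasFDerivAt.fderiv (HasFDerivAt.prodMk hg3.hasFDerivAt (hasFDerivAt_const ((0, 0) : ℝ × ℝ) p))
  have e2 := congrFun h2 p
  have e3 := congrFun h3 p
  simp only [lieBracket3] at e2 e3
  rw [hX2] at e2
  rw [hX3] at e3
  simp only [hp] at e2 e3
  have h2' := congrArg (fun v : ℝ × ℝ × ℝ => v.2.2) e2
  have h3' := congrArg (fun v : ℝ × ℝ × ℝ => v.2.2) e3
  simp only [Prod.snd_sub, Prod.fst_sub, ContinuousLinearMap.prod_apply,
    ContinuousLinearMap.zero_apply, Real.exp_zero, neg_zero, mul_zero] at h2' h3'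
  norm_num at h2' h3'
  rw [h2'] at h3'
  norm_num at h3'
end

section
/- Let L_0 = ∂_t and L_1 = e^{−t}(∂_t + ∂_x) be vector fields on ℝ³ (coordinates (t,x,u)). A smooth vector field C on ℝ³ satisfies [L_0, C] = 0 and [L_1, C] = 0 if and only if there exist C^∞ functions f, g, h : ℝ → ℝ such that C = f(u)e^{−x}∂_t + (g(u) + f(u)e^{−x})∂_x + h(u)∂_u. (Step of Case 2 of Section 4: the general form of a central element commuting with L_0 and L_1.) -/
namespace Case2Aux

noncomputable def e1 : (ℝ × ℝ × ℝ) →L[ℝ] ℝ := ContinuousLinearMap.fst ℝ ℝ (ℝ × ℝ)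

lemma hL1 (p : ℝ × ℝ × ℝ) :
    HasFDerivAt (fun q : ℝ × ℝ × ℝ => (Real.exp (-q.1), Real.exp (-q.1), (0:ℝ)))
      (((-Real.exp (-p.1)) • e1).prod (((-Real.exp (-p.1)) • e1).prod 0)) p := by
  have hneg : HasFDerivAt (fun q : ℝ × ℝ × ℝ => -q.1) (-e1 : (ℝ × ℝ × ℝ) →L[ℝ] ℝ) p :=
    (-e1).hasFDerivAt
  have h1 : HasFDerivAt (fun q : ℝ × ℝ × ℝ => Real.exp (-q.1)) ((-Real.exp (-p.1)) • e1) p := by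
    have h := (Real.hasDerivAt_exp (-p.1)).comp_hasFDerivAt p hneg
    rw [smul_neg, ← neg_smul] at h
    exact h
  exact h1.prodMk (h1.prodMk (hasFDerivAt_const 0 p))

lemma dirT (C : ℝ × ℝ × ℝ → ℝ × ℝ × ℝ) (hd : Differentiable ℝ C) (t x u : ℝ) :
    HasDerivAt (fun s : ℝ => C (s, x, u)) (fderiv ℝ C (t, x, u) (1, 0, 0)) t :=
  (hd _).hasFDerivAt.comp_hasDerivAt t
    ((hasDerivAt_id t).prodMk ((hasDerivAt_const t x).prodMk (hasDerivAt_const t u)))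

lemma dirX (C : ℝ × ℝ × ℝ → ℝ × ℝ × ℝ) (hd : Differentiable ℝ C) (t x u : ℝ) :
    HasDerivAt (fun s : ℝ => C (t, s, u)) (fderiv ℝ C (t, x, u) (0, 1, 0)) x :=
  (hd _).hasFDerivAt.comp_hasDerivAt x
    ((hasDerivAt_const x t).prodMk ((hasDerivAt_id x).prodMk (hasDerivAt_const x u)))

lemma dirD (C : ℝ × ℝ × ℝ → ℝ × ℝ × ℝ) (hd : Differentiable ℝ C) (t x u : ℝ) :
    HasDerivAt (fun s : ℝ => C (t + s, x + s, u)) (fderiv ℝ C (t, x, u) (1, 1, 0)) 0 := by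
  have hline : HasDerivAt (fun s : ℝ => ((t + s, x + s, u) : ℝ × ℝ × ℝ)) (1, 1, 0) 0 :=
    (((hasDerivAt_id 0).const_add t)).prodMk
      ((((hasDerivAt_id 0).const_add x)).prodMk (hasDerivAt_const 0 u))
  have := (hd (t + 0, x + 0, u)).hasFDerivAt.comp_hasDerivAt 0 hline
  simpa [Function.comp_def] using this

end Case2Aux

open Case2Aux Real in
/-- Let `L_0 = ∂_t` and `L_1 = e^{-t}(∂_t + ∂_x)` on `ℝ³`. A smooth vector field `C`
satisfies `[L_0, C] = 0` and `[L_1, C] = 0` iff there are `C^∞` functions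
`f, g, h : ℝ → ℝ` with `C = f(u)e^{-x} ∂_t + (g(u) + f(u)e^{-x}) ∂_x + h(u) ∂_u`. -/
theorem central_element_case2 (C : ℝ × ℝ × ℝ → ℝ × ℝ × ℝ)
    (hC : ContDiff ℝ (⊤ : ℕ∞) C) :
    (lieBracket3 (fun _ => (1, 0, 0)) C = (fun _ => 0) ∧
      lieBracket3 (fun p => (Real.exp (-p.1), Real.exp (-p.1), 0)) C = (fun _ => 0)) ↔
    (∃ f g h : ℝ → ℝ, ContDiff ℝ (⊤ : ℕ∞) f ∧ ContDiff ℝ (⊤ : ℕ∞) g ∧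
      ContDiff ℝ (⊤ : ℕ∞) h ∧
      C = fun p =>
        (f p.2.2 * Real.exp (-p.2.1),
         g p.2.2 + f p.2.2 * Real.exp (-p.2.1),
         h p.2.2)) := by
  have hd : Differentiable ℝ C := hC.differentiable (by simp)
  constructor
  · rintro ⟨h0, h1⟩
    -- extract pointwise identities
    have ht : ∀ p : ℝ × ℝ × ℝ, fderiv ℝ C p (1, 0, 0) = 0 := by
      intro p
      have := congrFun h0 p
      simp only [lieBracket3] at this
      have hcst : fderiv ℝ (fun _ : ℝ × ℝ × ℝ => ((1 : ℝ), (0 : ℝ), (0 : ℝ))) p = 0 :=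
        fderiv_const_apply _
      rw [hcst] at this
      simpa [sub_eq_zero] using this
    have hx : ∀ p : ℝ × ℝ × ℝ, fderiv ℝ C p (1, 1, 0) = (-(C p).1, -(C p).1, 0) := by
      intro p
      have := congrFun h1 p
      simp only [lieBracket3] at this
      rw [(hL1 p).fderiv] at this
      have hMv : (((-Real.exp (-p.1)) • e1).prod (((-Real.exp (-p.1)) • e1).prod 0)) (C p)
          = Real.exp (-p.1) • ((-(C p).1, -(C p).1, 0) : ℝ × ℝ × ℝ) := by
        simp [e1, Prod.smul_mk, smul_eq_mul]
      rw [hMv] at this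
      have hLv : ((Real.exp (-p.1), Real.exp (-p.1), (0:ℝ)) : ℝ × ℝ × ℝ)
          = Real.exp (-p.1) • ((1, 1, 0) : ℝ × ℝ × ℝ) := by
        simp [Prod.smul_mk, smul_eq_mul]
      rw [hLv, (fderiv ℝ C p).map_smul] at this
      have hne : Real.exp (-p.1) ≠ 0 := Real.exp_ne_zero _
      have := sub_eq_zero.1 this
      exact smul_right_injective (ℝ × ℝ × ℝ) hne this
    have hx' : ∀ p : ℝ × ℝ × ℝ, fderiv ℝ C p (0, 1, 0) = (-(C p).1, -(C p).1, 0) := by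
      intro p
      have : ((0, 1, 0) : ℝ × ℝ × ℝ) = (1, 1, 0) - (1, 0, 0) := by
        simp [Prod.ext_iff]
      rw [this, (fderiv ℝ C p).map_sub, ht p, hx p, sub_zero]
    -- C is independent of t
    have hconstT : ∀ t x u : ℝ, C (t, x, u) = C (0, x, u) := by
      intro t x u
      have hder : ∀ s : ℝ, HasDerivAt (fun s : ℝ => C (s, x, u)) 0 s := by
        intro s
        have := dirT C hd s x u
        rwa [ht (s, x, u)] at this
      exact is_const_of_deriv_eq_zero (fun s => (hder s).differentiableAt)
        (fun s => (hder s).deriv) t 0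
    -- derivative facts in x for the components
    have hder1 : ∀ t x u : ℝ, HasDerivAt (fun s : ℝ => (C (t, s, u)).1) (-(C (t, x, u)).1) x := by
      intro t x u
      have := e1.hasFDerivAt.comp_hasDerivAt x (dirX C hd t x u)
      rw [hx' (t, x, u)] at this
      simpa [e1, Function.comp_def] using this
    -- component 1: (C (t,x,u)).1 * exp x is constant in x
    have hcomp1 : ∀ t x u : ℝ, (C (t, x, u)).1 * Real.exp x = (C (t, 0, u)).1 := by
      intro t x u
      have hder : ∀ s : ℝ,
          HasDerivAt (fun s : ℝ => (C (t, s, u)).1 * Real.exp s) 0 s := by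
        intro s
        have h := (hder1 t s u).mul (Real.hasDerivAt_exp s)
        have he : -(C (t, s, u)).1 * Real.exp s + (C (t, s, u)).1 * Real.exp s = 0 := by ring
        rwa [he] at h
      have := is_const_of_deriv_eq_zero (fun s => (hder s).differentiableAt)
        (fun s => (hder s).deriv) x 0
      simpa using this
    -- component 2 minus component 1 is constant in x
    have hcomp2 : ∀ t x u : ℝ, (C (t, x, u)).2.1 - (C (t, x, u)).1
        = (C (t, 0, u)).2.1 - (C (t, 0, u)).1 := by
      intro t x u
      have e2 : (ℝ × ℝ × ℝ) →L[ℝ] ℝ :=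
        (ContinuousLinearMap.fst ℝ ℝ ℝ).comp (ContinuousLinearMap.snd ℝ ℝ (ℝ × ℝ))
      have hder2 : ∀ s : ℝ,
          HasDerivAt (fun s : ℝ => (C (t, s, u)).2.1) (-(C (t, s, u)).1) s := by
        intro s
        have := ((ContinuousLinearMap.fst ℝ ℝ ℝ).comp
          (ContinuousLinearMap.snd ℝ ℝ (ℝ × ℝ))).hasFDerivAt.comp_hasDerivAt s
          (dirX C hd t s u)
        rw [hx' (t, s, u)] at this
        simpa [Function.comp_def] using this
      have hder : ∀ s : ℝ,
          HasDerivAt (fun s : ℝ => (C (t, s, u)).2.1 - (C (t, s, u)).1) 0 s := by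
        intro s
        have h := (hder2 s).sub (hder1 t s u)
        simpa [Pi.sub_def] using h
      exact is_const_of_deriv_eq_zero (fun s => (hder s).differentiableAt)
        (fun s => (hder s).deriv) x 0
    -- component 3 is constant in x
    have hcomp3 : ∀ t x u : ℝ, (C (t, x, u)).2.2 = (C (t, 0, u)).2.2 := by
      intro t x u
      have hder : ∀ s : ℝ, HasDerivAt (fun s : ℝ => (C (t, s, u)).2.2) 0 s := by
        intro s
        have := ((ContinuousLinearMap.snd ℝ ℝ ℝ).comp
          (ContinuousLinearMap.snd ℝ ℝ (ℝ × ℝ))).hasFDerivAt.comp_hasDerivAt s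
          (dirX C hd t s u)
        rw [hx' (t, s, u)] at this
        simpa [Function.comp_def] using this
      exact is_const_of_deriv_eq_zero (fun s => (hder s).differentiableAt)
        (fun s => (hder s).deriv) x 0
    -- define f, g, h
    refine ⟨fun u => (C (0, 0, u)).1,
            fun u => (C (0, 0, u)).2.1 - (C (0, 0, u)).1,
            fun u => (C (0, 0, u)).2.2, ?_, ?_, ?_, ?_⟩
    · have : ContDiff ℝ (⊤ : ℕ∞) (fun u : ℝ => C (0, 0, u)) :=
        hC.comp (contDiff_const.prodMk (contDiff_const.prodMk contDiff_id))
      exact contDiff_fst.comp this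
    · have : ContDiff ℝ (⊤ : ℕ∞) (fun u : ℝ => C (0, 0, u)) :=
        hC.comp (contDiff_const.prodMk (contDiff_const.prodMk contDiff_id))
      exact ((contDiff_fst.comp contDiff_snd).comp this).sub (contDiff_fst.comp this)
    · have : ContDiff ℝ (⊤ : ℕ∞) (fun u : ℝ => C (0, 0, u)) :=
        hC.comp (contDiff_const.prodMk (contDiff_const.prodMk contDiff_id))
      exact (contDiff_snd.comp contDiff_snd).comp this
    · funext p
      obtain ⟨t, x, u⟩ := p
      rw [hconstT t x u]
      have h1 : (C (0, x, u)).1 = (C (0, 0, u)).1 * Real.exp (-x) := by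
        have := hcomp1 0 x u
        have hne : Real.exp x ≠ 0 := Real.exp_ne_zero x
        rw [← this, Real.exp_neg, mul_assoc, mul_inv_cancel₀ hne, mul_one]
      have h3 : (C (0, x, u)).2.2 = (C (0, 0, u)).2.2 := hcomp3 0 x u
      have h2 : (C (0, x, u)).2.1
          = ((C (0, 0, u)).2.1 - (C (0, 0, u)).1) + (C (0, 0, u)).1 * Real.exp (-x) := by
        have := hcomp2 0 x u
        rw [← h1]
        linarith [this]
      exact Prod.ext h1 (Prod.ext h2 h3)
  · rintro ⟨f, g, h, hf, hg, hh, rfl⟩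
    set C : ℝ × ℝ × ℝ → ℝ × ℝ × ℝ := fun p =>
      (f p.2.2 * Real.exp (-p.2.1),
       g p.2.2 + f p.2.2 * Real.exp (-p.2.1),
       h p.2.2) with hCdef
    have hu : ContDiff ℝ (⊤ : ℕ∞) (fun p : ℝ × ℝ × ℝ => p.2.2) :=
      contDiff_snd.comp contDiff_snd
    have hxc : ContDiff ℝ (⊤ : ℕ∞) (fun p : ℝ × ℝ × ℝ => p.2.1) :=
      contDiff_fst.comp contDiff_snd
    have hc1 : ContDiff ℝ (⊤ : ℕ∞) (fun p : ℝ × ℝ × ℝ => f p.2.2 * Real.exp (-p.2.1)) :=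
      (hf.comp hu).mul (Real.contDiff_exp.comp hxc.neg)
    have hCs : ContDiff ℝ (⊤ : ℕ∞) C :=
      hc1.prodMk (((hg.comp hu).add hc1).prodMk (hh.comp hu))
    have hCd : Differentiable ℝ C := hCs.differentiable (by simp)
    -- C doesn't depend on t
    have hT : ∀ p : ℝ × ℝ × ℝ, fderiv ℝ C p (1, 0, 0) = 0 := by
      intro p
      obtain ⟨t, x, u⟩ := p
      have h1 := dirT C hCd t x u
      have h2 : HasDerivAt (fun s : ℝ => C (s, x, u)) 0 t := by
        have : (fun s : ℝ => C (s, x, u))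
            = fun _ : ℝ => (f u * Real.exp (-x), g u + f u * Real.exp (-x), h u) := rfl
        rw [this]
        exact hasDerivAt_const t _
      exact h1.unique h2
    -- fderiv C p (1,1,0)
    have hD : ∀ p : ℝ × ℝ × ℝ,
        fderiv ℝ C p (1, 1, 0) = (-(C p).1, -(C p).1, 0) := by
      intro p
      obtain ⟨t, x, u⟩ := p
      have h1 := dirD C hCd t x u
      have hE : HasDerivAt (fun s : ℝ => Real.exp (-(x + s))) (-Real.exp (-x)) 0 := by
        have hin : HasDerivAt (fun s : ℝ => -(x + s)) (-1) 0 :=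
          ((hasDerivAt_id 0).const_add x).neg
        have := (Real.hasDerivAt_exp (-(x + 0))).comp 0 hin
        simpa [Function.comp_def] using this
      have hA : HasDerivAt (fun s : ℝ => f u * Real.exp (-(x + s)))
          (-(f u * Real.exp (-x))) 0 := by
        have := hE.const_mul (f u)
        simpa [mul_comm, mul_neg] using this
      have hB : HasDerivAt (fun s : ℝ => g u + f u * Real.exp (-(x + s)))
          (-(f u * Real.exp (-x))) 0 := hA.const_add (g u)
      have h2 : HasDerivAt (fun s : ℝ => C (t + s, x + s, u))
          ((-(f u * Real.exp (-x)), -(f u * Real.exp (-x)), 0) : ℝ × ℝ × ℝ) 0 :=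
        hA.prodMk (hB.prodMk (hasDerivAt_const 0 (h u)))
      exact h1.unique h2
    -- bracket with L0 is zero
    constructor
    · funext p
      simp only [lieBracket3]
      rw [hT p, fderiv_const_apply]
      simp
    · funext p
      simp only [lieBracket3]
      rw [(hL1 p).fderiv]
      have hLv : ((Real.exp (-p.1), Real.exp (-p.1), (0:ℝ)) : ℝ × ℝ × ℝ)
          = Real.exp (-p.1) • ((1, 1, 0) : ℝ × ℝ × ℝ) := by
        simp [Prod.smul_mk, smul_eq_mul]
      rw [hLv, (fderiv ℝ C p).map_smul, hD p]
      obtain ⟨t, x, u⟩ := p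
      simp only [e1, hCdef]
      simp [Prod.smul_mk, smul_eq_mul, Prod.ext_iff]
end

section
/- The equation u_{tx} = f(u)·u_t·u_x (the canonical equation (d1) invariant under a direct sum of two Witt algebras) is linearizable to the wave equation: let f : ℝ → ℝ be C^∞, set F(s) = ∫₀^s f(r) dr and U(s) = ∫₀^s e^{−F(r)} dr. If u : ℝ² → ℝ is a C^∞ solution of u_{tx} = f(u)·u_t·u_x, then the function v = U ∘ u satisfies v_{tx} = 0 on ℝ². -/
/-- Linearization of `u_{tx} = f(u)·u_t·u_x`: with `F(s) = ∫₀^s f(r) dr` and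
`U(s) = ∫₀^s e^{-F(r)} dr`, if `u` is a `C^∞` solution then `v = U ∘ u` solves the wave
equation `v_{tx} = 0`. -/
theorem d1_linearizable (f : ℝ → ℝ) (hf : ContDiff ℝ (⊤ : ℕ∞) f)
    (F : ℝ → ℝ) (hF : F = fun s => ∫ r in (0 : ℝ)..s, f r)
    (U : ℝ → ℝ) (hU : U = fun s => ∫ r in (0 : ℝ)..s, Real.exp (-F r))
    (u : ℝ × ℝ → ℝ) (hu : ContDiff ℝ (⊤ : ℕ∞) u)
    (heq : ∀ t x : ℝ,
      deriv (fun s => deriv (fun y => u (s, y)) x) t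
        = f (u (t, x)) * deriv (fun s => u (s, x)) t * deriv (fun y => u (t, y)) x) :
    ∀ t x : ℝ, deriv (fun s => deriv (fun y => U (u (s, y))) x) t = 0 := by
  intro t x
  -- derivatives of F and U
  have hF' : ∀ s, HasDerivAt F (f s) s := by
    intro s
    rw [hF]
    exact (hf.continuous.integral_hasStrictDerivAt 0 s).hasDerivAt
  have hFc : Continuous F := by
    have : Differentiable ℝ F := fun s => (hF' s).differentiableAt
    exact this.continuous
  have hU' : ∀ s, HasDerivAt U (Real.exp (-F s)) s := by
    intro s
    rw [hU]
    exact ((Real.continuous_exp.comp hFc.neg).integral_hasStrictDerivAt 0 s).hasDerivAt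
  -- partial derivatives of u
  have hud : Differentiable ℝ u := hu.differentiable (by simp)
  have hpart : ∀ (p : ℝ × ℝ) (c : ℝ × ℝ),
      HasDerivAt (fun s : ℝ => u (p.1 + s * c.1, p.2 + s * c.2))
        (fderiv ℝ u p c) 0 := by
    intro p c
    have hline : HasDerivAt (fun s : ℝ => ((p.1 + s * c.1, p.2 + s * c.2) : ℝ × ℝ)) c 0 := by
      have h1 : HasDerivAt (fun s : ℝ => p.1 + s * c.1) c.1 0 := by
        simpa using ((hasDerivAt_id (0:ℝ)).mul_const c.1).const_add p.1
      have h2 : HasDerivAt (fun s : ℝ => p.2 + s * c.2) c.2 0 := by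
        simpa using ((hasDerivAt_id (0:ℝ)).mul_const c.2).const_add p.2
      exact h1.prodMk h2
    have := (hud _).hasFDerivAt.comp_hasDerivAt 0 (by simpa using hline)
    simp only [zero_mul, add_zero, Prod.mk.eta] at this
    exact this
  -- simpler: direct partials
  have hut : ∀ a b : ℝ, HasDerivAt (fun s : ℝ => u (s, b)) (fderiv ℝ u (a, b) (1, 0)) a := by
    intro a b
    have hline : HasDerivAt (fun s : ℝ => ((s, b) : ℝ × ℝ)) ((1 : ℝ), (0 : ℝ)) a :=
      (hasDerivAt_id a).prodMk (hasDerivAt_const a b)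
    exact (hud _).hasFDerivAt.comp_hasDerivAt a hline
  have hux : ∀ a b : ℝ, HasDerivAt (fun y : ℝ => u (a, y)) (fderiv ℝ u (a, b) (0, 1)) b := by
    intro a b
    have hline : HasDerivAt (fun y : ℝ => ((a, y) : ℝ × ℝ)) ((0 : ℝ), (1 : ℝ)) b :=
      (hasDerivAt_const b a).prodMk (hasDerivAt_id b)
    exact (hud _).hasFDerivAt.comp_hasDerivAt b hline
  -- w = ∂u/∂x as a smooth function
  set w : ℝ × ℝ → ℝ := fun p => fderiv ℝ u p (0, 1) with hw
  have hwc : ContDiff ℝ (⊤ : ℕ∞) w :=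
    (hu.fderiv_right (by exact_mod_cast le_top)).clm_apply contDiff_const
  have hwd : Differentiable ℝ w := hwc.differentiable (by simp)
  have hwt : ∀ a b : ℝ, HasDerivAt (fun s : ℝ => w (s, b)) (fderiv ℝ w (a, b) (1, 0)) a := by
    intro a b
    have hline : HasDerivAt (fun s : ℝ => ((s, b) : ℝ × ℝ)) ((1 : ℝ), (0 : ℝ)) a :=
      (hasDerivAt_id a).prodMk (hasDerivAt_const a b)
    exact (hwd _).hasFDerivAt.comp_hasDerivAt a hline
  -- value of u_{tx}
  have hkey : fderiv ℝ w (t, x) (1, 0)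
      = f (u (t, x)) * fderiv ℝ u (t, x) (1, 0) * w (t, x) := by
    have h1 : (fun s : ℝ => deriv (fun y => u (s, y)) x) = fun s => w (s, x) := by
      funext s
      exact (hux s x).deriv
    have h2 := heq t x
    rw [h1] at h2
    rw [(hut t x).deriv] at h2
    rw [(hwt t x).deriv] at h2
    rw [h2, (hux t x).deriv]
  -- E(s) = exp(-F(u(s,x)))
  have hE : ∀ a b : ℝ, HasDerivAt (fun s : ℝ => Real.exp (-F (u (s, b))))
      (-(f (u (a, b)) * fderiv ℝ u (a, b) (1, 0)) * Real.exp (-F (u (a, b)))) a := by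
    intro a b
    have h1 : HasDerivAt (fun s : ℝ => F (u (s, b)))
        (f (u (a, b)) * fderiv ℝ u (a, b) (1, 0)) a :=
      (hF' (u (a, b))).comp a (hut a b)
    have h2 := h1.neg.exp
    simpa [mul_comm] using h2
  -- inner derivative: deriv (fun y => U (u (s,y))) x = exp(-F(u(s,x))) * w(s,x)
  have hinner : (fun s : ℝ => deriv (fun y => U (u (s, y))) x)
      = fun s => Real.exp (-F (u (s, x))) * w (s, x) := by
    funext s
    have h1 : HasDerivAt (fun y : ℝ => U (u (s, y)))
        (Real.exp (-F (u (s, x))) * w (s, x)) x := by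
      have := (hU' (u (s, x))).comp x (hux s x)
      exact this
    exact h1.deriv
  rw [hinner]
  have hprod : HasDerivAt (fun s : ℝ => Real.exp (-F (u (s, x))) * w (s, x))
      (-(f (u (t, x)) * fderiv ℝ u (t, x) (1, 0)) * Real.exp (-F (u (t, x))) * w (t, x)
        + Real.exp (-F (u (t, x))) * fderiv ℝ w (t, x) (1, 0)) t :=
    (hE t x).mul (hwt t x)
  rw [hprod.deriv, hkey]
  ring
end

section
/- General solution of the canonical equation (d2): let λ ∈ ℝ and let g, h : ℝ → ℝ be C^∞ functions such that g′(x)/(h(t) − λg(x)) > 0 for all (t,x) ∈ ℝ² (in particular h(t) − λg(x) ≠ 0). Then the function u(t,x) = ln( g′(x) / (h(t) − λ g(x)) ) is a C^∞ solution of u_{tx} = λ·u_t·exp(u) on ℝ². -/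
/-- General solution of `u_{tx} = λ·u_t·e^u`: if `g, h : ℝ → ℝ` are `C^∞` with
`g'(x)/(h(t) - λg(x)) > 0` for all `(t,x)`, then `u(t,x) = ln(g'(x)/(h(t) - λg(x)))`
is a `C^∞` solution on `ℝ²`. -/
theorem d2_general_solution (lam : ℝ) (g h : ℝ → ℝ)
    (hg : ContDiff ℝ (⊤ : ℕ∞) g) (hh : ContDiff ℝ (⊤ : ℕ∞) h)
    (hpos : ∀ t x : ℝ, 0 < deriv g x / (h t - lam * g x))
    (u : ℝ × ℝ → ℝ)
    (hu : u = fun p => Real.log (deriv g p.2 / (h p.1 - lam * g p.2))) :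
    ContDiff ℝ (⊤ : ℕ∞) u ∧
    ∀ t x : ℝ,
      deriv (fun s => deriv (fun y => u (s, y)) x) t
        = lam * deriv (fun s => u (s, x)) t * Real.exp (u (t, x)) := by
  subst hu
  have hDne : ∀ t x : ℝ, h t - lam * g x ≠ 0 := by
    intro t x h0
    have := hpos t x
    rw [h0, div_zero] at this
    exact lt_irrefl 0 this
  have hGne : ∀ x : ℝ, deriv g x ≠ 0 := by
    intro x h0
    have := hpos 0 x
    rw [h0, zero_div] at this
    exact lt_irrefl 0 this
  have hg' : ContDiff ℝ (⊤ : ℕ∞) (deriv g) := (contDiff_infty_iff_deriv.mp hg).2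
  have hgd : Differentiable ℝ g := hg.differentiable (by simp)
  have hg'd : Differentiable ℝ (deriv g) := hg'.differentiable (by simp)
  have hhd : Differentiable ℝ h := hh.differentiable (by simp)
  constructor
  · apply ContDiff.log
    · exact (hg'.comp contDiff_snd).div
        ((hh.comp contDiff_fst).sub (contDiff_const.mul (hg.comp contDiff_snd)))
        (fun p => hDne p.1 p.2)
    · intro p; exact (hpos p.1 p.2).ne'
  · intro t x
    set G := deriv g x with hG
    set G2 := deriv (deriv g) x with hG2
    have hinner : ∀ s : ℝ, deriv (fun y => Real.log (deriv g y / (h s - lam * g y))) x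
        = G2 / G + lam * G / (h s - lam * g x) := by
      intro s
      have hq : HasDerivAt (fun y => deriv g y / (h s - lam * g y))
          ((G2 * (h s - lam * g x) - G * (0 - lam * G)) / (h s - lam * g x) ^ 2) x :=
        ((hg'd x).hasDerivAt).div
          ((hasDerivAt_const x (h s)).sub (((hgd x).hasDerivAt).const_mul lam))
          (hDne s x)
      have hl := hq.log (hpos s x).ne'
      rw [hl.deriv]
      have hD := hDne s x
      have hGn : G ≠ 0 := hGne x
      rw [← hG]
      field_simp
      ring
    have hcongr : (fun s => deriv (fun y => Real.log (deriv g y / (h s - lam * g y))) x)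
        = fun s => G2 / G + lam * G / (h s - lam * g x) := funext hinner
    rw [hcongr]
    have hDt : HasDerivAt (fun s => h s - lam * g x) (deriv h t) t :=
      ((hhd t).hasDerivAt).sub_const _
    have hL : HasDerivAt (fun s => G2 / G + lam * G / (h s - lam * g x))
        ((0 * (h t - lam * g x) - lam * G * deriv h t) / (h t - lam * g x) ^ 2) t :=
      ((hasDerivAt_const t (lam * G)).div hDt (hDne t x)).const_add (G2 / G)
    rw [hL.deriv]
    have hR : HasDerivAt (fun s => Real.log (G / (h s - lam * g x)))
        (((0 * (h t - lam * g x) - G * deriv h t) / (h t - lam * g x) ^ 2)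
          / (G / (h t - lam * g x))) t :=
      ((hasDerivAt_const t G).div hDt (hDne t x)).log (hpos t x).ne'
    rw [hR.deriv, Real.exp_log (hpos t x)]
    have hD := hDne t x
    have hGn : G ≠ 0 := hGne x
    rw [← hG]
    field_simp
    ring
end

section
/- The realization 𝔇₃ of Theorem 5 is a realization of the direct sum of two Witt algebras on ℝ³: the families of vector fields A_m = e^{−mt}∂_t + m e^{−mt}∂_x and B_n = n e^{−nu}∂_x + e^{−nu}∂_u (m, n ∈ ℤ) satisfy [A_m, A_k] = (m−k)A_{m+k} and [B_n, B_k] = (n−k)B_{n+k} for all m, k, n ∈ ℤ, and [A_m, B_n] = 0 for all m, n ∈ ℤ. -/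
/-- First Witt family of the realization `𝔇₃`: `A_m = e^{-mt} ∂_t + m e^{-mt} ∂_x`. -/
noncomputable def D3A (m : ℤ) : ℝ × ℝ × ℝ → ℝ × ℝ × ℝ := fun p =>
  (Real.exp (-(m : ℝ) * p.1), (m : ℝ) * Real.exp (-(m : ℝ) * p.1), 0)

/-- Second Witt family of the realization `𝔇₃`: `B_n = n e^{-nu} ∂_x + e^{-nu} ∂_u`. -/
noncomputable def D3B (n : ℤ) : ℝ × ℝ × ℝ → ℝ × ℝ × ℝ := fun p =>
  (0, (n : ℝ) * Real.exp (-(n : ℝ) * p.2.2), Real.exp (-(n : ℝ) * p.2.2))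

open ContinuousLinearMap in
noncomputable def LA (m : ℤ) (p : ℝ × ℝ × ℝ) : (ℝ × ℝ × ℝ) →L[ℝ] (ℝ × ℝ × ℝ) :=
  (Real.exp (-(m : ℝ) * p.1) • (-(m : ℝ)) • fst ℝ ℝ (ℝ × ℝ)).prod
    (((m : ℝ) • Real.exp (-(m : ℝ) * p.1) • (-(m : ℝ)) • fst ℝ ℝ (ℝ × ℝ)).prod 0)

open ContinuousLinearMap in
noncomputable def LB (n : ℤ) (p : ℝ × ℝ × ℝ) : (ℝ × ℝ × ℝ) →L[ℝ] (ℝ × ℝ × ℝ) :=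
  (0 : (ℝ × ℝ × ℝ) →L[ℝ] ℝ).prod
    (((n : ℝ) • Real.exp (-(n : ℝ) * p.2.2) • (-(n : ℝ)) • (snd ℝ ℝ ℝ).comp (snd ℝ ℝ (ℝ × ℝ))).prod
      (Real.exp (-(n : ℝ) * p.2.2) • (-(n : ℝ)) • (snd ℝ ℝ ℝ).comp (snd ℝ ℝ (ℝ × ℝ))))

lemma hasFDerivA (m : ℤ) (p : ℝ × ℝ × ℝ) : HasFDerivAt (D3A m) (LA m p) p := by
  have h0 : HasFDerivAt (fun q : ℝ × ℝ × ℝ => -(m : ℝ) * q.1)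
      ((-(m : ℝ)) • ContinuousLinearMap.fst ℝ ℝ (ℝ × ℝ)) p :=
    (hasFDerivAt_fst).const_mul _
  have h1 := (Real.hasDerivAt_exp (-(m : ℝ) * p.1)).comp_hasFDerivAt p h0
  have h2 := h1.const_mul (m : ℝ)
  exact HasFDerivAt.prodMk h1 (HasFDerivAt.prodMk h2 (hasFDerivAt_const (0 : ℝ) p))

lemma hasFDerivB (n : ℤ) (p : ℝ × ℝ × ℝ) : HasFDerivAt (D3B n) (LB n p) p := by
  have hu : HasFDerivAt (fun q : ℝ × ℝ × ℝ => q.2.2)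
      ((ContinuousLinearMap.snd ℝ ℝ ℝ).comp (ContinuousLinearMap.snd ℝ ℝ (ℝ × ℝ))) p :=
    (hasFDerivAt_snd).snd
  have h0 := hu.const_mul (-(n : ℝ))
  have h1 := (Real.hasDerivAt_exp (-(n : ℝ) * p.2.2)).comp_hasFDerivAt p h0
  have h2 := h1.const_mul (n : ℝ)
  exact HasFDerivAt.prodMk (hasFDerivAt_const (0 : ℝ) p) (HasFDerivAt.prodMk h2 h1)

/-- The realization `𝔇₃` is a realization of the direct sum of two Witt algebras on `ℝ³`:
both families satisfy the Witt commutation relations and they commute with each other. -/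
theorem D3_direct_sum_realization :
    (∀ m k : ℤ, lieBracket3 (D3A m) (D3A k)
        = fun p => ((m : ℝ) - (k : ℝ)) • D3A (m + k) p) ∧
    (∀ n k : ℤ, lieBracket3 (D3B n) (D3B k)
        = fun p => ((n : ℝ) - (k : ℝ)) • D3B (n + k) p) ∧
    (∀ m n : ℤ, lieBracket3 (D3A m) (D3B n) = fun _ => 0) := by
  refine ⟨?_, ?_, ?_⟩
  · intro m k
    funext p
    simp only [lieBracket3, (hasFDerivA m p).fderiv, (hasFDerivA k p).fderiv]
    unfold LA D3A
    push_cast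
    rw [show (-((m : ℝ) + (k : ℝ)) * p.1) = -(m : ℝ) * p.1 + -(k : ℝ) * p.1 by ring,
      Real.exp_add]
    simp [Prod.ext_iff]
    exact ⟨by ring, by ring⟩
  · intro n k
    funext p
    simp only [lieBracket3, (hasFDerivB n p).fderiv, (hasFDerivB k p).fderiv]
    unfold LB D3B
    push_cast
    rw [show (-((n : ℝ) + (k : ℝ)) * p.2.2) = -(n : ℝ) * p.2.2 + -(k : ℝ) * p.2.2 by ring,
      Real.exp_add]
    simp [Prod.ext_iff]
    exact ⟨by ring, by ring⟩
  · intro m n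
    funext p
    simp only [lieBracket3, (hasFDerivA m p).fderiv, (hasFDerivB n p).fderiv]
    unfold LA LB D3A D3B
    simp [Prod.ext_iff]
end
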